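/- arXiv:math/9411208 — 12 statements merged into one kernel-verified Lean document; each statement's English description precedes it below -/
import Mathlib

section
/- For every partially ordered set P: P is a semi-Cohen poset if and only if the regular open algebra RO(P) is a semi-Cohen complete Boolean algebra. -/
universe u v

/-- Two elements of a preordered set are compatible if they have a common lower bound. -/
def PosetCompat {P : Type u} [Preorder P] (p q : P) : Prop :=
  ∃ r, r ≤ p ∧ r ≤ q

/-- `R` is a regular subposet of `P`: for every `p₀ ∈ P` there is `p₁ ∈ R` such that every
`p₂ ∈ R` with `p₂ ≤ p₁` is compatible with `p₀`. -/
def IsRegularSubposet {P : Type u} [Preorder P] (R : Set P) : Prop :=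
  ∀ p₀ : P, ∃ p₁ ∈ R, ∀ p₂ ∈ R, p₂ ≤ p₁ → PosetCompat p₂ p₀

/-- `C` is a club (closed unbounded) collection of countable subsets of `X`: all members are
countable, `C` is closed under unions of nonempty countable `⊆`-increasing chains, and every
countable subset of `X` is contained in some member of `C`. -/
def IsClubIn (X : Type u) (C : Set (Set X)) : Prop :=
  (∀ S ∈ C, S.Countable) ∧
  (∀ 𝒞 : Set (Set X), 𝒞.Nonempty → 𝒞.Countable → 𝒞 ⊆ C → IsChain (· ⊆ ·) 𝒞 → ⋃₀ 𝒞 ∈ C) ∧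
  (∀ S : Set X, S.Countable → ∃ T ∈ C, S ⊆ T)

/-- A poset `P` is semi-Cohen if the collection of its countable regular subposets contains a
club collection of countable subsets of `P`. -/
def SemiCohenPoset (P : Type u) [Preorder P] : Prop :=
  ∃ C : Set (Set P), IsClubIn P C ∧ ∀ R ∈ C, IsRegularSubposet R

/-- A Boolean subalgebra (as a subset). -/
def IsBoolSubalgebra {B : Type u} [BooleanAlgebra B] (A : Set B) : Prop :=
  ⊥ ∈ A ∧ ⊤ ∈ A ∧ (∀ x ∈ A, ∀ y ∈ A, x ⊔ y ∈ A) ∧ (∀ x ∈ A, ∀ y ∈ A, x ⊓ y ∈ A) ∧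
    ∀ x ∈ A, xᶜ ∈ A

/-- `S` is an antichain contained in `A`: a set of pairwise disjoint nonzero elements. -/
def IsBAAntichainIn {B : Type u} [BooleanAlgebra B] (A S : Set B) : Prop :=
  S ⊆ A ∧ ⊥ ∉ S ∧ S.Pairwise fun x y => x ⊓ y = ⊥

/-- `S` is a maximal antichain of `A`. -/
def IsMaxBAAntichainIn {B : Type u} [BooleanAlgebra B] (A S : Set B) : Prop :=
  IsBAAntichainIn A S ∧ ∀ T : Set B, IsBAAntichainIn A T → S ⊆ T → S = T

/-- `A` is a regular subalgebra of `B`: a Boolean subalgebra every maximal antichain of which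
is a maximal antichain of `B`. -/
def IsRegularSubalgebra {B : Type u} [BooleanAlgebra B] (A : Set B) : Prop :=
  IsBoolSubalgebra A ∧ ∀ S : Set B, IsMaxBAAntichainIn A S → IsMaxBAAntichainIn Set.univ S

/-- A complete Boolean algebra is semi-Cohen if the collection of its countable regular
subalgebras contains a club collection of countable subsets. -/
def SemiCohenBA (B : Type u) [CompleteBooleanAlgebra B] : Prop :=
  ∃ C : Set (Set B), IsClubIn B C ∧ ∀ A ∈ C, IsRegularSubalgebra A

section RegularCBA

variable {α : Type*} [Order.Frame α]

/-- The complete lattice structure on regular elements of a frame. -/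
noncomputable def Heyting.Regular.completeLattice : CompleteLattice (Heyting.Regular α) :=
  Heyting.Regular.gi.liftCompleteLattice

/-- The regular elements of a frame form a complete Boolean algebra. -/
noncomputable instance Heyting.Regular.instCompleteBooleanAlgebra :
    CompleteBooleanAlgebra (Heyting.Regular α) := by
  letI cl : CompleteLattice (Heyting.Regular α) := Heyting.Regular.completeLattice
  exact { (inferInstance : BooleanAlgebra (Heyting.Regular α)), cl with }

end RegularCBA

/-- The topology on a preordered set generated by the cones `{q | q ≤ p}`. -/
def conesTopology (P : Type*) [Preorder P] : TopologicalSpace P :=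
  TopologicalSpace.generateFrom { s : Set P | ∃ p : P, s = { q : P | q ≤ p } }

/-- The regular open algebra `RO(P)` of a preordered set `P`: the complete Boolean algebra
of regular open subsets of `P` in the topology generated by the cones. -/
def RO (P : Type u) [Preorder P] : Type u :=
  letI := conesTopology P
  Heyting.Regular (TopologicalSpace.Opens P)

noncomputable instance (P : Type u) [Preorder P] : CompleteBooleanAlgebra (RO P) :=
  letI := conesTopology P
  (inferInstance : CompleteBooleanAlgebra (Heyting.Regular (TopologicalSpace.Opens P)))

namespace SCAux


variable {α : Type*}

/-- Iterated closure under a finitary, set-valued operation. -/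
def iterCl (H : Finset α → Set α) : ℕ → Set α → Set α
  | 0, X => X
  | n+1, X => iterCl H n X ∪ ⋃ t ∈ {t : Finset α | ↑t ⊆ iterCl H n X}, H t

/-- Closure of `X` under `H`. -/
def clH (H : Finset α → Set α) (X : Set α) : Set α := ⋃ n, iterCl H n X

lemma iterCl_mono_left (H : Finset α → Set α) {X Y : Set α} (h : X ⊆ Y) :
    ∀ n, iterCl H n X ⊆ iterCl H n Y := by
  intro n
  induction n with
  | zero => exact h
  | succ n ih =>
    apply Set.union_subset_union ih
    refine Set.iUnion_mono fun t => ?_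
    exact Set.iUnion_mono' fun ht => ⟨ht.trans ih, subset_rfl⟩

lemma iterCl_le_succ (H : Finset α → Set α) (X : Set α) (n : ℕ) :
    iterCl H n X ⊆ iterCl H (n+1) X := Set.subset_union_left

lemma iterCl_mono_nat (H : Finset α → Set α) (X : Set α) : Monotone (fun n => iterCl H n X) := by
  apply monotone_nat_of_le_succ
  exact fun n => iterCl_le_succ H X n

lemma subset_clH (H : Finset α → Set α) (X : Set α) : X ⊆ clH H X :=
  Set.subset_iUnion (fun n => iterCl H n X) 0

lemma clH_mono (H : Finset α → Set α) {X Y : Set α} (h : X ⊆ Y) : clH H X ⊆ clH H Y :=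
  Set.iUnion_mono fun n => iterCl_mono_left H h n

lemma finset_subset_iUnion_mono {f : ℕ → Set α} (hf : Monotone f) {t : Finset α}
    (h : ↑t ⊆ ⋃ n, f n) : ∃ n, ↑t ⊆ f n := by
  classical
  induction t using Finset.induction with
  | empty => exact ⟨0, by simp⟩
  | @insert x s hx ih =>
    have hs : ↑s ⊆ ⋃ n, f n := by
      refine Set.Subset.trans ?_ h
      simp [Finset.coe_insert]
    obtain ⟨n, hn⟩ := ih hs
    have hxm : x ∈ ⋃ n, f n := h (by simp)
    obtain ⟨m, hm⟩ := Set.mem_iUnion.1 hxm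
    refine ⟨max n m, ?_⟩
    rw [Finset.coe_insert]
    refine Set.insert_subset (hf (le_max_right n m) hm) (hn.trans (hf (le_max_left n m)))

lemma clH_closed (H : Finset α → Set α) (X : Set α) {t : Finset α} (ht : ↑t ⊆ clH H X) :
    H t ⊆ clH H X := by
  obtain ⟨n, hn⟩ := finset_subset_iUnion_mono (iterCl_mono_nat H X) ht
  refine Set.Subset.trans ?_ (Set.subset_iUnion (fun n => iterCl H n X) (n+1))
  refine Set.Subset.trans ?_ Set.subset_union_right
  exact Set.subset_biUnion_of_mem (u := fun t => H t) hn

lemma countable_finset_coe_subset {S : Set α} (hS : S.Countable) :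
    {t : Finset α | ↑t ⊆ S}.Countable := by
  have h1 : {t : Finset α | ↑t ⊆ S} ⊆ (fun t : Finset α => (↑t : Set α)) ⁻¹'
      {u : Set α | u.Finite ∧ u ⊆ S} := by
    intro t ht
    exact ⟨t.finite_toSet, ht⟩
  refine Set.Countable.mono h1 ?_
  exact (Set.countable_setOf_finite_subset hS).preimage Finset.coe_injective

lemma iterCl_countable {H : Finset α → Set α} (hH : ∀ t, (H t).Countable) {X : Set α}
    (hX : X.Countable) : ∀ n, (iterCl H n X).Countable := by
  intro n
  induction n with
  | zero => exact hX
  | succ n ih =>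
    refine Set.Countable.union ih ?_
    exact Set.Countable.biUnion (countable_finset_coe_subset ih) (fun t _ => hH t)

lemma clH_countable {H : Finset α → Set α} (hH : ∀ t, (H t).Countable) {X : Set α}
    (hX : X.Countable) : (clH H X).Countable :=
  Set.countable_iUnion (iterCl_countable hH hX)

lemma exists_finset_of_mem_iterCl (H : Finset α → Set α) (X : Set α) :
    ∀ n, ∀ x ∈ iterCl H n X, ∃ t : Finset α, ↑t ⊆ X ∧ x ∈ iterCl H n ↑t := by
  classical
  intro n
  induction n with
  | zero => exact fun x hx => ⟨{x}, by simpa [iterCl] using hx, by simp [iterCl]⟩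
  | succ n ih =>
    intro x hx
    rcases hx with hx | hx
    · obtain ⟨t, ht, hxt⟩ := ih x hx
      exact ⟨t, ht, iterCl_le_succ H _ n hxt⟩
    · simp only [Set.mem_iUnion] at hx
      obtain ⟨s, hs, hxs⟩ := hx
      -- hs : ↑s ⊆ iterCl H n X, hxs : x ∈ H s
      have hg : ∀ y ∈ (s : Set α), ∃ t : Finset α, ↑t ⊆ X ∧ y ∈ iterCl H n ↑t :=
        fun y hy => ih y (hs hy)
      set g : α → Finset α := fun y =>
        if h : y ∈ (s : Set α) ∧ True then
          Classical.choose (hg y h.1) else ∅ with hgdef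
      refine ⟨s.biUnion g, ?_, ?_⟩
      · intro z hz
        simp only [Finset.coe_biUnion, Set.mem_iUnion] at hz
        obtain ⟨y, hy, hzy⟩ := hz
        have hy' : y ∈ (s : Set α) := hy
        have := (Classical.choose_spec (hg y hy')).1
        rw [hgdef] at hzy
        simp only [hy', true_and, dif_pos] at hzy
        exact this hzy
      · refine Set.mem_union_right _ ?_
        refine Set.mem_biUnion (s := {t : Finset α | ↑t ⊆ iterCl H n ↑(s.biUnion g)}) ?_ hxs
        intro y hy
        have hy' : y ∈ (s : Set α) := hy
        have hspec := (Classical.choose_spec (hg y hy')).2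
        have hsub : (↑(g y) : Set α) ⊆ ↑(s.biUnion g) := by
          intro z hz
          simp only [Finset.coe_biUnion, Set.mem_iUnion]
          exact ⟨y, hy', hz⟩
        have : g y = Classical.choose (hg y hy') := by
          rw [hgdef]; simp [hy']
        rw [this] at hsub
        exact iterCl_mono_left H hsub n hspec

lemma exists_finset_of_mem_clH (H : Finset α → Set α) (X : Set α) {x : α} (hx : x ∈ clH H X) :
    ∃ t : Finset α, ↑t ⊆ X ∧ x ∈ clH H ↑t := by
  obtain ⟨n, hn⟩ := Set.mem_iUnion.1 hx
  obtain ⟨t, ht, hxt⟩ := exists_finset_of_mem_iterCl H X n x hn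
  exact ⟨t, ht, Set.mem_iUnion.2 ⟨n, hxt⟩⟩




variable {X : Type u}

open Classical in
/-- Kueker-style function for a club. -/
noncomputable def kF {C : Set (Set X)} (hC : IsClubIn X C) : Finset X → Set X :=
  Finset.strongInduction fun s ih =>
    let base : Set X := ↑s ∪ ⋃ u ∈ s.ssubsets, ⋃ (hu : u ⊂ s), ih u hu
    if h : base.Countable then (hC.2.2 base h).choose else ∅

open Classical in
lemma kF_eq {C : Set (Set X)} (hC : IsClubIn X C) (s : Finset X) :
    kF hC s = (let base : Set X := ↑s ∪ ⋃ u ∈ s.ssubsets, ⋃ (hu : u ⊂ s), kF hC u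
      if h : base.Countable then (hC.2.2 base h).choose else ∅) := by
  rw [kF, Finset.strongInduction_eq]

open Classical in
lemma kF_spec {C : Set (Set X)} (hC : IsClubIn X C) :
    ∀ s : Finset X, kF hC s ∈ C ∧
      (↑s ∪ ⋃ u ∈ s.ssubsets, ⋃ (_ : u ⊂ s), kF hC u) ⊆ kF hC s := by
  intro s
  induction s using Finset.strongInduction with
  | _ s ih =>
    have hcnt : ((↑s : Set X) ∪ ⋃ u ∈ s.ssubsets, ⋃ (_ : u ⊂ s), kF hC u).Countable := by
      refine Set.Countable.union s.countable_toSet ?_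
      refine Set.Countable.biUnion ?_ ?_
      · exact Finset.countable_toSet _
      · intro u _
        exact Set.countable_iUnion fun hsub => hC.1 _ (ih u hsub).1
    rw [kF_eq hC s]
    simp only [dif_pos hcnt]
    exact ⟨(hC.2.2 _ hcnt).choose_spec.1, (hC.2.2 _ hcnt).choose_spec.2⟩

lemma kF_mem {C : Set (Set X)} (hC : IsClubIn X C) (s : Finset X) : kF hC s ∈ C :=
  (kF_spec hC s).1

lemma subset_kF {C : Set (Set X)} (hC : IsClubIn X C) (s : Finset X) : ↑s ⊆ kF hC s :=
  Set.Subset.trans Set.subset_union_left (kF_spec hC s).2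

lemma kF_mono {C : Set (Set X)} (hC : IsClubIn X C) {s t : Finset X} (h : s ⊆ t) :
    kF hC s ⊆ kF hC t := by
  classical
  rcases eq_or_ne s t with rfl | hne
  · exact subset_rfl
  · have hss : s ⊂ t := ssubset_of_subset_of_ne h hne
    refine Set.Subset.trans ?_ (kF_spec hC t).2
    refine Set.Subset.trans ?_ Set.subset_union_right
    intro x hx
    refine Set.mem_biUnion (Finset.mem_coe.2 (Finset.mem_ssubsets.2 hss)) ?_
    exact Set.mem_iUnion.2 ⟨hss, hx⟩

lemma kF_closed_mem {C : Set (Set X)} (hC : IsClubIn X C) {S : Set X} (hcnt : S.Countable)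
    (hne : S.Nonempty) (hcl : ∀ t : Finset X, ↑t ⊆ S → kF hC t ⊆ S) : S ∈ C := by
  classical
  obtain ⟨f, rfl⟩ := Set.Countable.exists_eq_range hcnt hne
  set t : ℕ → Finset X := fun n => (Finset.range (n+1)).image f with ht
  have htmono : ∀ m n, m ≤ n → t m ⊆ t n := by
    intro m n hmn
    exact Finset.image_subset_image (Finset.range_subset_range.2 (by omega))
  have htS : ∀ n, (↑(t n) : Set X) ⊆ Set.range f := by
    intro n x hx
    simp only [ht, Finset.coe_image, Set.mem_image] at hx
    obtain ⟨m, _, rfl⟩ := hx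
    exact Set.mem_range_self m
  have hchain : IsChain (· ⊆ ·) (Set.range fun n => kF hC (t n)) := by
    rintro _ ⟨m, rfl⟩ _ ⟨n, rfl⟩ _
    rcases le_total m n with h | h
    · exact Or.inl (kF_mono hC (htmono m n h))
    · exact Or.inr (kF_mono hC (htmono n m h))
  have hmem := hC.2.1 (Set.range fun n => kF hC (t n)) (Set.range_nonempty _)
    (Set.countable_range _) (by rintro _ ⟨n, rfl⟩; exact kF_mem hC (t n)) hchain
  have heq : ⋃₀ (Set.range fun n => kF hC (t n)) = Set.range f := by
    rw [Set.sUnion_range]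
    apply Set.Subset.antisymm
    · exact Set.iUnion_subset fun n => hcl (t n) (htS n)
    · rintro _ ⟨n, rfl⟩
      refine Set.mem_iUnion.2 ⟨n, subset_kF hC (t n) ?_⟩
      simp only [ht, Finset.coe_image, Set.mem_image, Finset.mem_coe, Finset.mem_range]
      exact ⟨n, Nat.lt_succ_self n, rfl⟩
  rwa [heq] at hmem




variable {B : Type u} [BooleanAlgebra B]

/-- From a regular subalgebra, a "projection" property. -/
lemma lemmaA {A : Set B} (hA : IsRegularSubalgebra A) {b : B} (hb : b ≠ ⊥) :
    ∃ a₁ ∈ A, a₁ ≠ ⊥ ∧ ∀ a₂ ∈ A, a₂ ≠ ⊥ → a₂ ≤ a₁ → a₂ ⊓ b ≠ ⊥ := by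
  by_contra hcon
  push_neg at hcon
  -- hcon : ∀ a₁ ∈ A, a₁ ≠ ⊥ → ∃ a₂ ∈ A, a₂ ≠ ⊥ ∧ a₂ ≤ a₁ ∧ a₂ ⊓ b = ⊥
  set D : Set B := {a | a ∈ A ∧ a ≠ ⊥ ∧ a ⊓ b = ⊥} with hD
  set 𝒮 : Set (Set B) := {S | IsBAAntichainIn A S ∧ S ⊆ D} with h𝒮
  have hzorn : ∃ m, (∅ : Set B) ⊆ m ∧ Maximal (· ∈ 𝒮) m := by
    refine zorn_subset_nonempty 𝒮 ?_ ∅ ?_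
    · intro c hc hchain hcne
      refine ⟨⋃₀ c, ⟨⟨?_, ?_, ?_⟩, ?_⟩, fun s hs => Set.subset_sUnion_of_mem hs⟩
      · intro x ⟨s, hs, hxs⟩
        exact (hc hs).1.1 hxs
      · rintro ⟨s, hs, hbs⟩
        exact (hc hs).1.2.1 hbs
      · intro x ⟨s, hs, hxs⟩ y ⟨u, hu, hyu⟩ hxy
        rcases eq_or_ne s u with rfl | hne
        · exact (hc hs).1.2.2 hxs hyu hxy
        · rcases hchain hs hu hne with h | h
          · exact (hc hu).1.2.2 (h hxs) hyu hxy
          · exact (hc hs).1.2.2 hxs (h hyu) hxy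
      · intro x ⟨s, hs, hxs⟩
        exact (hc hs).2 hxs
    · exact ⟨⟨Set.empty_subset _, fun h => h, Set.pairwise_empty _⟩, Set.empty_subset _⟩
  obtain ⟨m, -, hm⟩ := hzorn
  have hmS : m ∈ 𝒮 := hm.1
  -- m is a maximal antichain of A
  have hmax : IsMaxBAAntichainIn A m := by
    refine ⟨hmS.1, ?_⟩
    intro T hT hmT
    by_contra hne
    have : ∃ t, t ∈ T ∧ t ∉ m := by
      by_contra h
      push_neg at h
      exact hne (Set.Subset.antisymm hmT h)
    obtain ⟨t, htT, htm⟩ := this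
    have htA : t ∈ A := hT.1 htT
    have htb : t ≠ ⊥ := fun h => hT.2.1 (h ▸ htT)
    obtain ⟨a₂, ha₂A, ha₂b, ha₂t, ha₂d⟩ := hcon t htA htb
    have ha₂m : a₂ ∉ m := by
      intro hmem
      have hst : a₂ ⊓ t = ⊥ := hT.2.2 (hmT hmem) htT (fun h => htm (h ▸ hmem))
      exact ha₂b (by rw [← inf_eq_left.2 ha₂t]; exact hst)
    have hbig : m ∪ {a₂} ∈ 𝒮 := by
      refine ⟨⟨?_, ?_, ?_⟩, ?_⟩
      · exact Set.union_subset hmS.1.1 (by simpa using ha₂A)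
      · rintro (h | h)
        · exact hmS.1.2.1 h
        · exact ha₂b (Set.mem_singleton_iff.1 h).symm
      · intro x hx y hy hxy
        have key : ∀ s ∈ m, s ⊓ a₂ = ⊥ := by
          intro s hsm
          have hst : s ⊓ t = ⊥ := hT.2.2 (hmT hsm) htT (fun h => htm (h ▸ hsm))
          exact le_bot_iff.1 ((inf_le_inf_left s ha₂t).trans hst.le)
        rcases hx with hx | hx <;> rcases hy with hy | hy
        · exact hmS.1.2.2 hx hy hxy
        · rw [Set.mem_singleton_iff.1 hy]; exact key x hx
        · rw [Set.mem_singleton_iff.1 hx, inf_comm]; exact key y hy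
        · exact absurd (Set.mem_singleton_iff.1 hx ▸ Set.mem_singleton_iff.1 hy ▸ rfl) hxy
      · refine Set.union_subset hmS.2 ?_
        intro x hx
        rw [Set.mem_singleton_iff.1 hx]
        exact ⟨ha₂A, ha₂b, ha₂d⟩
    have := hm.2 hbig Set.subset_union_left
    exact ha₂m (this (Set.mem_union_right _ rfl))
  have hmaxU := hA.2 m hmax
  -- but b contradicts maximality in the universe
  have hbm : b ∉ m := by
    intro h
    have := (hmS.2 h).2.2
    exact (hmS.2 h).2.1 (by simpa using this)
  have hbig2 : IsBAAntichainIn Set.univ (m ∪ {b}) := by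
    refine ⟨Set.subset_univ _, ?_, ?_⟩
    · rintro (h | h)
      · exact hmS.1.2.1 h
      · exact hb (Set.mem_singleton_iff.1 h).symm
    · intro x hx y hy hxy
      have key : ∀ s ∈ m, s ⊓ b = ⊥ := fun s hsm => (hmS.2 hsm).2.2
      rcases hx with hx | hx <;> rcases hy with hy | hy
      · exact hmS.1.2.2 hx hy hxy
      · rw [Set.mem_singleton_iff.1 hy]; exact key x hx
      · rw [Set.mem_singleton_iff.1 hx, inf_comm]; exact key y hy
      · exact absurd (Set.mem_singleton_iff.1 hx ▸ Set.mem_singleton_iff.1 hy ▸ rfl) hxy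
  have := hmaxU.2 (m ∪ {b}) hbig2 Set.subset_union_left
  exact hbm (this ▸ Set.mem_union_right _ rfl : b ∈ m)

/-- The converse: the projection property implies regularity. -/
lemma lemmaB {A : Set B} (hsub : IsBoolSubalgebra A)
    (hproj : ∀ b : B, b ≠ ⊥ → ∃ a₁ ∈ A, a₁ ≠ ⊥ ∧ ∀ a₂ ∈ A, a₂ ≠ ⊥ → a₂ ≤ a₁ → a₂ ⊓ b ≠ ⊥) :
    IsRegularSubalgebra A := by
  refine ⟨hsub, ?_⟩
  intro S hS
  refine ⟨⟨Set.subset_univ _, hS.1.2.1, hS.1.2.2⟩, ?_⟩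
  intro T hT hST
  by_contra hne
  have : ∃ t, t ∈ T ∧ t ∉ S := by
    by_contra h
    push_neg at h
    exact hne (Set.Subset.antisymm hST h)
  obtain ⟨t, htT, htS⟩ := this
  have htb : t ≠ ⊥ := fun h => hT.2.1 (h ▸ htT)
  obtain ⟨a₁, ha₁A, ha₁b, ha₁⟩ := hproj t htb
  have hmeet : ∃ s ∈ S, a₁ ⊓ s ≠ ⊥ := by
    by_contra h
    push_neg at h
    have ha₁S : a₁ ∉ S := by
      intro hmem
      exact ha₁b (by simpa using h a₁ hmem)
    have hbig : IsBAAntichainIn A (S ∪ {a₁}) := by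
      refine ⟨Set.union_subset hS.1.1 (by simpa using ha₁A), ?_, ?_⟩
      · rintro (hh | hh)
        · exact hS.1.2.1 hh
        · exact ha₁b (Set.mem_singleton_iff.1 hh).symm
      · intro x hx y hy hxy
        rcases hx with hx | hx <;> rcases hy with hy | hy
        · exact hS.1.2.2 hx hy hxy
        · rw [Set.mem_singleton_iff.1 hy, inf_comm]; exact h x hx
        · rw [Set.mem_singleton_iff.1 hx]; exact h y hy
        · exact absurd (Set.mem_singleton_iff.1 hx ▸ Set.mem_singleton_iff.1 hy ▸ rfl) hxy
    have := hS.2 (S ∪ {a₁}) hbig Set.subset_union_left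
    exact ha₁S (this ▸ Set.mem_union_right _ rfl : a₁ ∈ S)
  obtain ⟨s, hsS, hsne⟩ := hmeet
  have ha₂A : a₁ ⊓ s ∈ A := hsub.2.2.2.1 a₁ ha₁A s (hS.1.1 hsS)
  have hkey := ha₁ (a₁ ⊓ s) ha₂A hsne inf_le_left
  have hst : s ⊓ t = ⊥ := hT.2.2 (hST hsS) htT (fun h => htS (h ▸ hsS))
  refine hkey (le_bot_iff.1 ?_)
  calc a₁ ⊓ s ⊓ t ≤ s ⊓ t := inf_le_inf_right t inf_le_right
  _ = ⊥ := hst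




variable {P : Type u} [Preorder P]

noncomputable def wset (p q : P) : Set P := by
  classical
  exact if h : PosetCompat p q then {h.choose} else ∅

lemma wset_eq_pos {p q : P} (h : PosetCompat p q) : wset p q = {h.choose} := by
  rw [wset]
  simp only [dif_pos h]

lemma wset_eq_neg {p q : P} (h : ¬ PosetCompat p q) : wset p q = ∅ := by
  rw [wset]
  simp only [dif_neg h]

lemma wset_spec {p q r : P} (hr : r ∈ wset p q) : r ≤ p ∧ r ≤ q := by
  by_cases h : PosetCompat p q
  · rw [wset_eq_pos h] at hr
    rw [Set.mem_singleton_iff.1 hr]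
    exact h.choose_spec
  · rw [wset_eq_neg h] at hr
    exact absurd hr (Set.notMem_empty r)

lemma wset_nonempty {p q : P} (h : PosetCompat p q) : (wset p q).Nonempty := by
  rw [wset_eq_pos h]; exact ⟨_, rfl⟩

lemma wset_countable (p q : P) : (wset p q).Countable := by
  by_cases h : PosetCompat p q
  · rw [wset_eq_pos h]; exact Set.countable_singleton _
  · rw [wset_eq_neg h]; exact Set.countable_empty

/-- finite subsets of unions of chains -/
lemma finset_subset_of_subset_sUnion {α : Type*} {𝒞 : Set (Set α)} (hne : 𝒞.Nonempty)
    (hchain : IsChain (· ⊆ ·) 𝒞) {t : Finset α} (h : ↑t ⊆ ⋃₀ 𝒞) : ∃ A ∈ 𝒞, ↑t ⊆ A := by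
  classical
  induction t using Finset.induction with
  | empty => obtain ⟨A, hA⟩ := hne; exact ⟨A, hA, by simp⟩
  | @insert x s hx ih =>
    have hs : ↑s ⊆ ⋃₀ 𝒞 := by
      refine Set.Subset.trans ?_ h
      simp [Finset.coe_insert]
    obtain ⟨A, hA, hsA⟩ := ih hs
    obtain ⟨A', hA', hxA'⟩ := h (show x ∈ ↑(insert x s) by simp)
    rcases eq_or_ne A A' with rfl | hne2
    · exact ⟨A, hA, by rw [Finset.coe_insert]; exact Set.insert_subset hxA' hsA⟩
    · rcases hchain hA hA' hne2 with hle | hle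
      · exact ⟨A', hA', by rw [Finset.coe_insert]; exact Set.insert_subset hxA' (hsA.trans hle)⟩
      · exact ⟨A, hA, by rw [Finset.coe_insert]; exact Set.insert_subset (hle hxA') hsA⟩




attribute [local instance] conesTopology

open TopologicalSpace

variable {P : Type u} [Preorder P]

-- test defeq facts
example : RO P = Heyting.Regular (Opens P) := rfl

def roV (a : RO P) : Set P := ((Heyting.Regular.val a : Opens P) : Set P)

example : roV (⊥ : RO P) = (∅ : Set P) := by
  show ((⊥ : Opens P) : Set P) = ∅
  simp

example (a b : RO P) : roV (a ⊓ b) = roV a ∩ roV b := rfl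

example (a b : RO P) : a ≤ b ↔ roV a ⊆ roV b := by
  constructor
  · intro h; exact h
  · intro h; exact h

example : Function.Injective (roV (P := P)) := by
  intro a b h
  apply Heyting.Regular.coe_injective
  exact TopologicalSpace.Opens.ext h

-- continuing namespace SCAux, local instance conesTopology, open TopologicalSpace
def cone (p : P) : Set P := {q | q ≤ p}

lemma isLowerSet_cone (p : P) : IsLowerSet (cone p) := fun _ _ hxy hy => le_trans hxy hy

lemma isOpen_iff_isLowerSet {U : Set P} : IsOpen U ↔ IsLowerSet U := by
  constructor
  · intro h
    induction h with
    | basic s hs => obtain ⟨p, rfl⟩ := hs; exact isLowerSet_cone p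
    | univ => exact isLowerSet_univ
    | inter s t _ _ ihs iht => exact ihs.inter iht
    | sUnion S _ ih => exact isLowerSet_sUnion ih
  · intro h
    have : U = ⋃₀ {s : Set P | ∃ p ∈ U, s = cone p} := by
      apply Set.Subset.antisymm
      · intro x hx
        exact ⟨cone x, ⟨x, hx, rfl⟩, le_refl x⟩
      · rintro x ⟨s, ⟨p, hp, rfl⟩, hx⟩
        exact h hx hp
    rw [this]
    apply TopologicalSpace.GenerateOpen.sUnion
    rintro s ⟨p, hp, rfl⟩
    exact TopologicalSpace.GenerateOpen.basic _ ⟨p, rfl⟩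

lemma opens_isLowerSet (U : Opens P) : IsLowerSet (U : Set P) :=
  isOpen_iff_isLowerSet.1 U.2

/-- The set-level "open complement". -/
def ocompl (U : Set P) : Set P := {x | ∀ y, y ≤ x → y ∉ U}

lemma isLowerSet_ocompl (U : Set P) : IsLowerSet (ocompl U) :=
  fun _ _ hxy hx y hyz => hx y (le_trans hyz hxy)

lemma coe_compl_opens (U : Opens P) : ((Uᶜ : Opens P) : Set P) = ocompl (U : Set P) := by
  set V : Opens P := ⟨ocompl (U : Set P), isOpen_iff_isLowerSet.2 (isLowerSet_ocompl _)⟩ with hV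
  have h1 : Uᶜ ≤ V := by
    have hdisj : Disjoint Uᶜ U := disjoint_compl_left
    have hd : ((Uᶜ : Opens P) : Set P) ∩ (U : Set P) = ∅ := by
      have h := hdisj.eq_bot
      rw [← TopologicalSpace.Opens.coe_inf, h, TopologicalSpace.Opens.coe_bot]
    intro x hx y hyx hyU
    have hyc : y ∈ ((Uᶜ : Opens P) : Set P) := opens_isLowerSet _ hyx hx
    have : y ∈ ((Uᶜ : Opens P) : Set P) ∩ (U : Set P) := ⟨hyc, hyU⟩
    rw [hd] at this
    exact this
  have h2 : V ≤ Uᶜ := by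
    rw [le_compl_iff_disjoint_right]
    rw [disjoint_iff]
    apply TopologicalSpace.Opens.ext
    simp only [TopologicalSpace.Opens.coe_inf, TopologicalSpace.Opens.coe_bot]
    apply Set.eq_empty_iff_forall_notMem.2
    rintro x ⟨hxV, hxU⟩
    exact hxV x (le_refl x) hxU
  exact le_antisymm h1 h2

/-- Set-level regularization. -/
def rrg (U : Set P) : Set P := {x | ∀ y, y ≤ x → ∃ z, z ≤ y ∧ z ∈ U}

lemma ocompl_ocompl (U : Set P) : ocompl (ocompl U) = rrg U := by
  ext x
  simp only [ocompl, rrg, Set.mem_setOf_eq]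
  constructor
  · intro h y hy
    have h2 := h y hy
    push_neg at h2
    exact h2
  · intro h y hy hmem
    obtain ⟨z, hzy, hzU⟩ := h y hy
    exact hmem z hzy hzU

/-- The cone as an open set. -/
def coneO (p : P) : Opens P := ⟨cone p, isOpen_iff_isLowerSet.2 (isLowerSet_cone p)⟩

/-- The canonical map from `P` to `RO P`. -/
def roe (p : P) : RO P := Heyting.Regular.toRegular (coneO p)

lemma roV_roe (p : P) : roV (roe p) = rrg (cone p) := by
  show (((coneO p)ᶜᶜ : Opens P) : Set P) = rrg (cone p)
  rw [coe_compl_opens, coe_compl_opens, ocompl_ocompl]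
  rfl

lemma self_mem_roV_roe (p : P) : p ∈ roV (roe p) := by
  rw [roV_roe]
  exact fun y hy => ⟨y, le_refl y, hy⟩

lemma roV_bot : roV (⊥ : RO P) = (∅ : Set P) := by
  show ((⊥ : Opens P) : Set P) = ∅
  simp

lemma roV_inf (a b : RO P) : roV (a ⊓ b) = roV a ∩ roV b := rfl

lemma le_iff_roV (a b : RO P) : a ≤ b ↔ roV a ⊆ roV b := Iff.rfl

lemma roV_injective : Function.Injective (roV (P := P)) := fun _ _ h =>
  Heyting.Regular.coe_injective (TopologicalSpace.Opens.ext h)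

lemma ne_bot_iff_roV (a : RO P) : a ≠ ⊥ ↔ (roV a).Nonempty := by
  rw [Set.nonempty_iff_ne_empty, ← roV_bot]
  exact ⟨fun h h2 => h (roV_injective h2), fun h h2 => h (h2 ▸ rfl)⟩

lemma roe_ne_bot (p : P) : roe p ≠ ⊥ :=
  (ne_bot_iff_roV _).2 ⟨p, self_mem_roV_roe p⟩

lemma roe_mono {p q : P} (h : p ≤ q) : roe p ≤ roe q := by
  rw [le_iff_roV, roV_roe, roV_roe]
  intro x hx y hy
  obtain ⟨z, hzy, hzp⟩ := hx y hy
  exact ⟨z, hzy, le_trans hzp h⟩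

lemma roV_isLowerSet (a : RO P) : IsLowerSet (roV a) := opens_isLowerSet _

/-- compatible implies nonzero meet -/
lemma compat_roe {p q : P} (h : ∃ r, r ≤ p ∧ r ≤ q) : roe p ⊓ roe q ≠ ⊥ := by
  obtain ⟨r, hrp, hrq⟩ := h
  rw [ne_bot_iff_roV, roV_inf]
  exact ⟨r, (le_iff_roV _ _).1 (roe_mono hrp) (self_mem_roV_roe r),
    (le_iff_roV _ _).1 (roe_mono hrq) (self_mem_roV_roe r)⟩

/-- nonzero meet implies compatible -/
lemma compat_of_roe {p q : P} (h : roe p ⊓ roe q ≠ ⊥) : ∃ r, r ≤ p ∧ r ≤ q := by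
  rw [ne_bot_iff_roV, roV_inf] at h
  obtain ⟨x, hxp, hxq⟩ := h
  rw [roV_roe] at hxp hxq
  obtain ⟨z, hzx, hzp⟩ := hxp x (le_refl x)
  have hz : z ∈ roV (roe q) := roV_isLowerSet (roe q) hzx ((roV_roe q) ▸ hxq)
  rw [roV_roe] at hz
  obtain ⟨w, hwz, hwq⟩ := hz z (le_refl z)
  exact ⟨w, le_trans hwz hzp, hwq⟩

/-- compat from roe p ≤ roe q -/
lemma compat_of_roe_le {p q : P} (h : roe p ≤ roe q) : ∃ r, r ≤ p ∧ r ≤ q := by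
  have hp : p ∈ roV (roe q) := (le_iff_roV _ _).1 h (self_mem_roV_roe p)
  rw [roV_roe] at hp
  obtain ⟨z, hzp, hzq⟩ := hp p (le_refl p)
  exact ⟨z, hzp, hzq⟩

lemma rrg_mono {U V : Set P} (h : U ⊆ V) : rrg U ⊆ rrg V := by
  intro x hx y hy
  obtain ⟨z, hzy, hzU⟩ := hx y hy
  exact ⟨z, hzy, h hzU⟩

lemma roV_regular (b : RO P) : rrg (roV b) = roV b := by
  have h : ((Heyting.Regular.val b)ᶜᶜ : Opens P) = Heyting.Regular.val b := Heyting.Regular.prop b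
  have h2 : (((Heyting.Regular.val b)ᶜᶜ : Opens P) : Set P) = rrg (roV b) := by
    rw [coe_compl_opens, coe_compl_opens, ocompl_ocompl]; rfl
  rw [← h2, h]; rfl

/-- density of the image of roe -/
lemma roe_dense {b : RO P} (hb : b ≠ ⊥) : ∃ p : P, roe p ≤ b := by
  rw [ne_bot_iff_roV] at hb
  obtain ⟨x, hx⟩ := hb
  refine ⟨x, ?_⟩
  rw [le_iff_roV, roV_roe, ← roV_regular b]
  exact rrg_mono (fun z hz => roV_isLowerSet b hz hx)


noncomputable def dset (b : RO P) : Set P := by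
  classical
  exact if h : b ≠ ⊥ then {(roe_dense h).choose} else ∅

lemma dset_eq_pos {b : RO P} (h : b ≠ ⊥) : dset b = {(roe_dense h).choose} := by
  rw [dset]
  simp only [dif_pos h]

lemma dset_eq_neg {b : RO P} (h : ¬ b ≠ ⊥) : dset b = ∅ := by
  rw [dset]
  simp only [dif_neg h]

lemma dset_spec {b : RO P} {p : P} (hp : p ∈ dset b) : roe p ≤ b := by
  by_cases h : b ≠ ⊥
  · rw [dset_eq_pos h] at hp
    rw [Set.mem_singleton_iff.1 hp]
    exact (roe_dense h).choose_spec
  · rw [dset_eq_neg h] at hp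
    exact absurd hp (Set.notMem_empty p)

lemma dset_nonempty {b : RO P} (h : b ≠ ⊥) : (dset b).Nonempty := by
  rw [dset_eq_pos h]; exact ⟨_, rfl⟩

lemma dset_countable (b : RO P) : (dset b).Countable := by
  by_cases h : b ≠ ⊥
  · rw [dset_eq_pos h]; exact Set.countable_singleton _
  · rw [dset_eq_neg h]; exact Set.countable_empty

lemma scForward (hsc : SemiCohenPoset P) : SemiCohenBA (RO P) := by
  classical
  obtain ⟨CP, hclub, hreg⟩ := hsc
  set HP : Finset P → Set P := fun t =>
    kF hclub t ∪ ⋃ p ∈ (t : Set P), ⋃ q ∈ (t : Set P), wset p q with hHP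
  have hHPc : ∀ t, (HP t).Countable := by
    intro t
    refine Set.Countable.union (hclub.1 _ (kF_mem hclub t)) ?_
    exact Set.Countable.biUnion t.countable_toSet
      (fun p _ => Set.Countable.biUnion t.countable_toSet (fun q _ => wset_countable p q))
  set HB : Finset (RO P) → Set (RO P) := fun t =>
    ({⊥, ⊤} ∪ ⋃ x ∈ (t : Set (RO P)), ⋃ y ∈ (t : Set (RO P)), {x ⊔ y, x ⊓ y, xᶜ}) ∪
      roe '' clH HP (⋃ x ∈ (t : Set (RO P)), dset x) with hHB
  have hHBc : ∀ t, (HB t).Countable := by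
    intro t
    refine Set.Countable.union (Set.Countable.union ((Set.countable_singleton _).insert _) ?_) ?_
    · exact Set.Countable.biUnion t.countable_toSet
        (fun p _ => Set.Countable.biUnion t.countable_toSet
          (fun q _ => (Set.countable_singleton _).insert _ |>.insert _))
    · refine Set.Countable.image ?_ roe
      refine clH_countable hHPc ?_
      exact Set.Countable.biUnion t.countable_toSet (fun x _ => dset_countable x)
  -- key closure property of members
  have key : ∀ A : Set (RO P), (∀ t : Finset (RO P), ↑t ⊆ A → HB t ⊆ A) →
      roe '' clH HP (⋃ x ∈ A, dset x) ⊆ A := by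
    intro A hA
    rintro _ ⟨p, hp, rfl⟩
    obtain ⟨t, ht, hpt⟩ := exists_finset_of_mem_clH HP _ hp
    set xf : P → RO P := fun y => if h : ∃ x ∈ A, y ∈ dset x then h.choose else ⊥ with hxf
    have hxfs : ∀ y ∈ (t : Set P), xf y ∈ A ∧ y ∈ dset (xf y) := by
      intro y hy
      have hyA := ht hy
      simp only [Set.mem_iUnion] at hyA
      obtain ⟨x, hx, hyx⟩ := hyA
      have hex : ∃ x ∈ A, y ∈ dset x := ⟨x, hx, hyx⟩
      have : xf y = hex.choose := by rw [hxf]; simp only [dif_pos hex]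
      rw [this]
      exact ⟨hex.choose_spec.1, hex.choose_spec.2⟩
    set s : Finset (RO P) := t.image xf with hs
    have hsA : ↑s ⊆ A := by
      intro x hx
      rw [hs] at hx
      simp only [Finset.coe_image, Set.mem_image, Finset.mem_coe] at hx
      obtain ⟨y, hy, rfl⟩ := hx
      exact (hxfs y hy).1
    have hts : ↑t ⊆ ⋃ x ∈ (s : Set (RO P)), dset x := by
      intro y hy
      simp only [Set.mem_iUnion]
      refine ⟨xf y, ?_, (hxfs y hy).2⟩
      rw [hs]
      simp only [Finset.coe_image, Set.mem_image, Finset.mem_coe]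
      exact ⟨y, hy, rfl⟩
    have hHBs := hA s hsA
    have himg : roe '' clH HP (⋃ x ∈ (s : Set (RO P)), dset x) ⊆ A :=
      Set.Subset.trans (Set.subset_union_right.trans (subset_rfl.trans (le_of_eq (hHB ▸ rfl)) : HB s ⊆ HB s)) hHBs
    exact himg ⟨p, clH_mono HP hts hpt, rfl⟩
  -- members are regular subalgebras
  have hmem_reg : ∀ A : Set (RO P),
      A.Countable → (∀ t : Finset (RO P), ↑t ⊆ A → HB t ⊆ A) → IsRegularSubalgebra A := by
    intro A hAc hAcl
    have h0 : HB ∅ ⊆ A := hAcl ∅ (by simp)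
    have hbot : ⊥ ∈ A := h0 (Or.inl (Or.inl (Or.inl rfl)))
    have htop : ⊤ ∈ A := h0 (Or.inl (Or.inl (Or.inr rfl)))
    have hpair : ∀ x ∈ A, ∀ y ∈ A, ({x ⊔ y, x ⊓ y, xᶜ} : Set (RO P)) ⊆ A := by
      intro x hx y hy
      have hsub : (↑({x, y} : Finset (RO P)) : Set (RO P)) ⊆ A := by
        simp only [Finset.coe_insert, Finset.coe_singleton]
        exact Set.insert_subset hx (Set.singleton_subset_iff.2 hy)
      refine Set.Subset.trans ?_ (hAcl {x, y} hsub)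
      intro z hz
      refine Or.inl (Or.inr ?_)
      simp only [Set.mem_iUnion]
      refine ⟨x, by simp, y, by simp, hz⟩
    have hsub : IsBoolSubalgebra A := by
      refine ⟨hbot, htop, ?_, ?_, ?_⟩
      · intro x hx y hy; exact hpair x hx y hy (by simp)
      · intro x hx y hy; exact hpair x hx y hy (by simp)
      · intro x hx; exact hpair x hx x hx (by simp)
    refine lemmaB hsub ?_
    intro b hb
    obtain ⟨p₀, hp₀⟩ := dset_nonempty hb
    set Y : Set P := ⋃ x ∈ A, dset x with hY
    set R : Set P := clH HP Y with hR
    have hRclk : ∀ t : Finset P, ↑t ⊆ R → kF hclub t ⊆ R := by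
      intro t ht
      exact Set.Subset.trans Set.subset_union_left (clH_closed HP Y ht)
    have hRclw : ∀ p ∈ R, ∀ q ∈ R, wset p q ⊆ R := by
      intro p hp q hq
      have ht : (↑({p, q} : Finset P) : Set P) ⊆ R := by
        simp only [Finset.coe_insert, Finset.coe_singleton]
        exact Set.insert_subset hp (Set.singleton_subset_iff.2 hq)
      refine Set.Subset.trans ?_ (clH_closed HP Y ht)
      refine Set.Subset.trans ?_ Set.subset_union_right
      intro z hz
      simp only [Set.mem_iUnion]
      exact ⟨p, by simp, q, by simp, hz⟩
    have hYc : Y.Countable := Set.Countable.biUnion hAc (fun x _ => dset_countable x)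
    have hRc : R.Countable := clH_countable hHPc hYc
    have hRne : R.Nonempty := by
      have h1 : kF hclub ∅ ⊆ R := hRclk ∅ (by simp)
      have h2 : IsRegularSubposet (kF hclub ∅) := hreg _ (kF_mem hclub ∅)
      obtain ⟨p₁, hp₁, -⟩ := h2 p₀
      exact ⟨p₁, h1 hp₁⟩
    have hRCP : R ∈ CP := kF_closed_mem hclub hRc hRne hRclk
    have hRreg : IsRegularSubposet R := hreg R hRCP
    obtain ⟨p₁, hp₁R, hp₁⟩ := hRreg p₀
    refine ⟨roe p₁, key A hAcl ⟨p₁, hp₁R, rfl⟩, roe_ne_bot p₁, ?_⟩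
    intro a₂ ha₂A ha₂b ha₂le
    obtain ⟨p₂, hp₂⟩ := dset_nonempty ha₂b
    have hp₂R : p₂ ∈ R := by
      refine subset_clH HP Y ?_
      simp only [hY, Set.mem_iUnion]
      exact ⟨a₂, ha₂A, hp₂⟩
    have hle : roe p₂ ≤ roe p₁ := le_trans (dset_spec hp₂) ha₂le
    obtain ⟨p₃, hp₃⟩ := wset_nonempty (compat_of_roe_le hle)
    have hp₃R : p₃ ∈ R := hRclw p₂ hp₂R p₁ hp₁R hp₃
    obtain ⟨h₃₂, h₃₁⟩ := wset_spec hp₃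
    obtain ⟨r, hr₃, hr₀⟩ := hp₁ p₃ hp₃R h₃₁
    have h1 : roe r ≤ a₂ := le_trans (roe_mono (le_trans hr₃ h₃₂)) (dset_spec hp₂)
    have h2 : roe r ≤ b := le_trans (roe_mono hr₀) (dset_spec hp₀)
    intro hcon
    exact roe_ne_bot r (le_bot_iff.1 (hcon ▸ le_inf h1 h2))
  refine ⟨{A | A.Countable ∧ ∀ t : Finset (RO P), ↑t ⊆ A → HB t ⊆ A}, ⟨?_, ?_, ?_⟩, ?_⟩
  · exact fun S hS => hS.1
  · intro 𝒞 hne hcnt hsub hchain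
    refine ⟨Set.Countable.sUnion hcnt (fun A hA => (hsub hA).1), ?_⟩
    intro t ht
    obtain ⟨A, hA, htA⟩ := finset_subset_of_subset_sUnion hne hchain ht
    exact Set.Subset.trans ((hsub hA).2 t htA) (Set.subset_sUnion_of_mem hA)
  · intro S hS
    exact ⟨clH HB S, ⟨clH_countable hHBc hS, fun t ht => clH_closed HB S ht⟩, subset_clH HB S⟩
  · exact fun A hA => hmem_reg A hA.1 hA.2

lemma scBackward (hsc : SemiCohenBA (RO P)) : SemiCohenPoset P := by
  classical
  obtain ⟨CB, hclub, hregA⟩ := hsc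
  set HB : Finset (RO P) → Set (RO P) := fun t =>
    kF hclub t ∪ ({⊥, ⊤} ∪ ⋃ x ∈ (t : Set (RO P)), ⋃ y ∈ (t : Set (RO P)), {x ⊔ y, x ⊓ y, xᶜ}) with hHB
  have hHBc : ∀ t, (HB t).Countable := by
    intro t
    refine Set.Countable.union (hclub.1 _ (kF_mem hclub t)) ?_
    refine Set.Countable.union ((Set.countable_singleton _).insert _) ?_
    exact Set.Countable.biUnion t.countable_toSet
      (fun p _ => Set.Countable.biUnion t.countable_toSet
        (fun q _ => (Set.countable_singleton _).insert _ |>.insert _))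
  set HP : Finset P → Set P := fun t => ⋃ b ∈ clH HB (roe '' (t : Set P)), dset b with hHP
  have hHPc : ∀ t : Finset P, (HP t).Countable := by
    intro t
    exact Set.Countable.biUnion (clH_countable hHBc (t.countable_toSet.image roe))
      (fun b _ => dset_countable b)
  have hmem : ∀ R : Set P,
      R.Countable → (∀ t : Finset P, ↑t ⊆ R → HP t ⊆ R) → IsRegularSubposet R := by
    intro R hRc hRcl p₀
    set A : Set (RO P) := clH HB (roe '' R) with hA
    have hAclk : ∀ t : Finset (RO P), ↑t ⊆ A → kF hclub t ⊆ A := by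
      intro t ht
      exact Set.Subset.trans Set.subset_union_left (clH_closed HB (roe '' R) ht)
    have hAbot : ⊥ ∈ A := by
      have h0 : HB ∅ ⊆ A := clH_closed HB (roe '' R) (by simp)
      exact h0 (Or.inr (Or.inl (Or.inl rfl)))
    have hACB : A ∈ CB :=
      kF_closed_mem hclub (clH_countable hHBc (hRc.image roe)) ⟨⊥, hAbot⟩ hAclk
    have hAreg := hregA A hACB
    obtain ⟨a₁, ha₁A, ha₁b, ha₁⟩ := lemmaA hAreg (roe_ne_bot p₀)
    -- density: find p₁ ∈ R with roe p₁ ≤ a₁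
    obtain ⟨t, ht, ha₁t⟩ := exists_finset_of_mem_clH HB _ ha₁A
    set pf : RO P → P := fun y => if h : ∃ p ∈ R, roe p = y then h.choose else p₀ with hpf
    have hpfs : ∀ y ∈ (t : Set (RO P)), pf y ∈ R ∧ roe (pf y) = y := by
      intro y hy
      obtain ⟨p, hpR, hpy⟩ := ht hy
      have hex : ∃ p ∈ R, roe p = y := ⟨p, hpR, hpy⟩
      have : pf y = hex.choose := by rw [hpf]; simp only [dif_pos hex]
      rw [this]
      exact ⟨hex.choose_spec.1, hex.choose_spec.2⟩
    set s : Finset P := t.image pf with hs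
    have hsR : ↑s ⊆ R := by
      intro p hp
      rw [hs] at hp
      simp only [Finset.coe_image, Set.mem_image, Finset.mem_coe] at hp
      obtain ⟨y, hy, rfl⟩ := hp
      exact (hpfs y hy).1
    have hts : ↑t ⊆ roe '' (s : Set P) := by
      intro y hy
      refine ⟨pf y, ?_, (hpfs y hy).2⟩
      rw [hs]
      simp only [Finset.coe_image, Set.mem_image, Finset.mem_coe]
      exact ⟨y, hy, rfl⟩
    have hdsub : dset a₁ ⊆ R := by
      have h1 : a₁ ∈ clH HB (roe '' (s : Set P)) := clH_mono HB hts ha₁t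
      have h2 : dset a₁ ⊆ HP s := by
        rw [hHP]
        exact Set.subset_biUnion_of_mem h1
      exact Set.Subset.trans h2 (hRcl s hsR)
    obtain ⟨p₁, hp₁⟩ := dset_nonempty ha₁b
    refine ⟨p₁, hdsub hp₁, ?_⟩
    intro p₂ hp₂R hp₂le
    have h2A : roe p₂ ∈ A := subset_clH HB (roe '' R) ⟨p₂, hp₂R, rfl⟩
    have h2 : roe p₂ ≤ a₁ := le_trans (roe_mono hp₂le) (dset_spec hp₁)
    exact compat_of_roe (ha₁ (roe p₂) h2A (roe_ne_bot p₂) h2)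
  refine ⟨{R | R.Countable ∧ ∀ t : Finset P, ↑t ⊆ R → HP t ⊆ R}, ⟨?_, ?_, ?_⟩, ?_⟩
  · exact fun S hS => hS.1
  · intro 𝒞 hne hcnt hsub hchain
    refine ⟨Set.Countable.sUnion hcnt (fun A hA => (hsub hA).1), ?_⟩
    intro t ht
    obtain ⟨A, hA, htA⟩ := finset_subset_of_subset_sUnion hne hchain ht
    exact Set.Subset.trans ((hsub hA).2 t htA) (Set.subset_sUnion_of_mem hA)
  · intro S hS
    exact ⟨clH HP S, ⟨clH_countable hHPc hS, fun t ht => clH_closed HP S ht⟩, subset_clH HP S⟩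
  · exact fun R hR => hmem R hR.1 hR.2

end SCAux

theorem stmt2 (P : Type u) [PartialOrder P] :
    SemiCohenPoset P ↔ SemiCohenBA (RO P) := ⟨SCAux.scForward, SCAux.scBackward⟩
end

section
/- Let I be a linearly ordered set and J ⊆ I. Then P(J), identified with {p ∈ P(I) : dom(p) ⊆ J}, is a regular subposet of the scale poset P(I). -/
universe u v

/-- A condition in the scale poset over a linear order `I`: a finite partial function `p` on `I`
together with `n_p ∈ ℕ` such that `p α ∈ ℕ^{n_p}` for `α ∈ dom p`; junk value `0` elsewhere. -/
@[ext] structure ScaleCond (I : Type u) : Type u where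
  len : ℕ
  dom : Finset I
  f : I → ℕ → ℕ
  junk : ∀ α i, α ∉ dom ∨ len ≤ i → f α i = 0

/-- The order of the scale poset. -/
instance ScaleCond.instPartialOrder (I : Type u) [LinearOrder I] :
    PartialOrder (ScaleCond I) where
  le p q := q.dom ⊆ p.dom ∧ q.len ≤ p.len ∧
    (∀ α ∈ q.dom, ∀ i < q.len, p.f α i = q.f α i) ∧
    (∀ i, q.len ≤ i → i < p.len → ∀ β ∈ q.dom, ∀ α ∈ q.dom, β < α → p.f β i ≤ p.f α i)
  le_refl p := ⟨Finset.Subset.refl _, le_refl _, fun _ _ _ _ => rfl,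
    fun i hi hi' => absurd hi' (by omega)⟩
  le_trans p q r hpq hqr := by
    obtain ⟨hd1, hn1, hv1, hg1⟩ := hpq
    obtain ⟨hd2, hn2, hv2, hg2⟩ := hqr
    refine ⟨hd2.trans hd1, hn2.trans hn1, ?_, ?_⟩
    · intro α hα i hi
      rw [hv1 α (hd2 hα) i (lt_of_lt_of_le hi hn2), hv2 α hα i hi]
    · intro i hi hi' β hβ α hα hβα
      by_cases hq : i < q.len
      · rw [hv1 β (hd2 hβ) i hq, hv1 α (hd2 hα) i hq]
        exact hg2 i hi hq β hβ α hα hβα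
      · exact hg1 i (by omega) hi' β (hd2 hβ) α (hd2 hα) hβα
  le_antisymm p q hpq hqp := by
    obtain ⟨hd1, hn1, hv1, -⟩ := hpq
    obtain ⟨hd2, hn2, hv2, -⟩ := hqp
    have hdom : p.dom = q.dom := Finset.Subset.antisymm hd2 hd1
    have hlen : p.len = q.len := le_antisymm hn2 hn1
    have hf : p.f = q.f := by
      funext α i
      by_cases hα : α ∈ q.dom
      · by_cases hi : i < q.len
        · exact hv1 α hα i hi
        · rw [p.junk α i (Or.inr (by omega)), q.junk α i (Or.inr (by omega))]
      · rw [p.junk α i (Or.inl (hdom ▸ hα)), q.junk α i (Or.inl hα)]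
    exact ScaleCond.ext hlen hdom hf

theorem stmt3 {I : Type u} [LinearOrder I] (J : Set I) :
    IsRegularSubposet {p : ScaleCond I | ↑p.dom ⊆ J} := by
  classical
  intro p₀
  set D : Finset I := p₀.dom.filter (fun α => α ∈ J) with hD
  have hjunk1 : ∀ α i, α ∉ D ∨ p₀.len ≤ i →
      (fun α i => if α ∈ D ∧ i < p₀.len then p₀.f α i else 0) α i = 0 := by
    intro α i h
    simp only
    rw [if_neg]
    rintro ⟨h1, h2⟩
    rcases h with h | h
    · exact h h1
    · omega
  refine ⟨⟨p₀.len, D, fun α i => if α ∈ D ∧ i < p₀.len then p₀.f α i else 0,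
      hjunk1⟩, ?_, ?_⟩
  · intro α hα
    simp only [hD, Finset.coe_filter, Set.mem_setOf_eq] at hα
    exact hα.2
  intro p₂ hp₂ hle
  obtain ⟨hd, hn, hv, hg⟩ := hle
  simp only at hd hn hv hg
  have hmemD : ∀ α, α ∈ p₀.dom → α ∈ p₂.dom → α ∈ D := fun α h1 h2 =>
    Finset.mem_filter.mpr ⟨h1, hp₂ h2⟩
  have hvD : ∀ α ∈ D, ∀ i < p₀.len, p₂.f α i = p₀.f α i := by
    intro α hα i hi
    have := hv α hα i hi
    rwa [if_pos ⟨hα, hi⟩] at this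
  have key : ∀ i, p₀.len ≤ i → i < p₂.len → ∀ β ∈ D, ∀ α ∈ D, β ≤ α →
      p₂.f β i ≤ p₂.f α i := by
    intro i h1 h2 β hβ α hα hβα
    rcases lt_or_eq_of_le hβα with h | h
    · exact hg i h1 h2 β hβ α hα h
    · subst h; exact le_refl _
  obtain ⟨g, hgdef⟩ : ∃ g : I → ℕ → ℕ, ∀ α i, g α i =
      if h : (D.filter (fun γ => γ < α)).Nonempty then
        p₂.f ((D.filter (fun γ => γ < α)).max' h) i else 0 := ⟨_, fun _ _ => rfl⟩
  have hgub : ∀ α i, p₀.len ≤ i → i < p₂.len → ∀ β ∈ D, β < α →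
      p₂.f β i ≤ g α i := by
    intro α i h1 h2 β hβ hβα
    have hβmem : β ∈ D.filter (fun γ => γ < α) := Finset.mem_filter.mpr ⟨hβ, hβα⟩
    have hne : (D.filter (fun γ => γ < α)).Nonempty := ⟨β, hβmem⟩
    rw [hgdef, dif_pos hne]
    have hmax := Finset.mem_filter.mp ((D.filter (fun γ => γ < α)).max'_mem hne)
    exact key i h1 h2 β hβ _ hmax.1 (Finset.le_max' _ β hβmem)
  have hglt : ∀ β α, β < α → ∀ i, p₀.len ≤ i → i < p₂.len → α ∈ D →
      g β i ≤ p₂.f α i := by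
    intro β α hβα i h1 h2 hα
    rw [hgdef]
    split_ifs with hne
    · have hm := Finset.mem_filter.mp ((D.filter (fun γ => γ < β)).max'_mem hne)
      exact key i h1 h2 _ hm.1 α hα (le_of_lt (lt_trans hm.2 hβα))
    · exact Nat.zero_le _
  have hgg : ∀ β α, β < α → ∀ i, p₀.len ≤ i → i < p₂.len → g β i ≤ g α i := by
    intro β α hβα i h1 h2
    rw [hgdef β]
    split_ifs with hne
    · have hm := Finset.mem_filter.mp ((D.filter (fun γ => γ < β)).max'_mem hne)
      exact hgub α i h1 h2 _ hm.1 (lt_trans hm.2 hβα)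
    · exact Nat.zero_le _
  have hjunk2 : ∀ α i, α ∉ p₂.dom ∪ p₀.dom ∨ p₂.len ≤ i →
      (fun α i => if i < p₂.len then
        (if α ∈ p₂.dom then p₂.f α i else if α ∈ p₀.dom then
          (if i < p₀.len then p₀.f α i else g α i) else 0) else 0) α i = 0 := by
    intro α i h
    simp only
    rcases h with h | h
    · simp only [Finset.mem_union, not_or] at h
      rw [if_neg h.1, if_neg h.2]
      split <;> rfl
    · rw [if_neg (by omega)]
  refine ⟨⟨p₂.len, p₂.dom ∪ p₀.dom, _, hjunk2⟩, ⟨Finset.subset_union_left,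
      le_refl _, ?_, ?_⟩, ⟨Finset.subset_union_right, hn, ?_, ?_⟩⟩
  · intro α hα i hi
    simp only
    rw [if_pos hi, if_pos hα]
  · intro i hi hi'
    exact absurd hi' (not_lt.mpr hi)
  · intro α hα i hi
    have hi2 : i < p₂.len := lt_of_lt_of_le hi hn
    simp only
    rw [if_pos hi2]
    by_cases h2 : α ∈ p₂.dom
    · rw [if_pos h2]
      exact hvD α (hmemD α hα h2) i hi
    · rw [if_neg h2, if_pos hα, if_pos hi]
  · intro i hi1 hi2 β hβ α hα hβα
    simp only
    rw [if_pos hi2, if_pos hi2]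
    have hilen : ¬ i < p₀.len := by omega
    by_cases h2β : β ∈ p₂.dom <;> by_cases h2α : α ∈ p₂.dom
    · rw [if_pos h2β, if_pos h2α]
      exact key i hi1 hi2 β (hmemD β hβ h2β) α (hmemD α hα h2α) (le_of_lt hβα)
    · rw [if_pos h2β, if_neg h2α, if_pos hα, if_neg hilen]
      exact hgub α i hi1 hi2 β (hmemD β hβ h2β) hβα
    · rw [if_neg h2β, if_pos hβ, if_neg hilen, if_pos h2α]
      exact hglt β α hβα i hi1 hi2 (hmemD α hα h2α)
    · rw [if_neg h2β, if_pos hβ, if_neg hilen, if_neg h2α, if_pos hα, if_neg hilen]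
      exact hgg β α hβα i hi1 hi2
end

section
/- For every linearly ordered set I, the scale poset P(I) is a semi-Cohen poset. -/
universe u v

section Aux

variable {I : Type u} [LinearOrder I]

open Classical in
/-- The subposet of conditions with domain inside `J`. -/
def scaleSub (J : Set I) : Set (ScaleCond I) := {p | ↑p.dom ⊆ J}

open Classical in
noncomputable def ScaleCond.restrictC (J : Set I) (p : ScaleCond I) : ScaleCond I where
  len := p.len
  dom := p.dom.filter (fun α => α ∈ J)
  f := fun α i => if α ∈ J then p.f α i else 0
  junk := by
    intro α i h
    by_cases hJ : α ∈ J
    · rw [if_pos hJ]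
      apply p.junk
      rcases h with h | h
      · exact Or.inl fun hd => h (Finset.mem_filter.2 ⟨hd, hJ⟩)
      · exact Or.inr h
    · rw [if_neg hJ]

open Classical in
noncomputable def ScaleCond.glue (J : Set I) (p₀ p₂ : ScaleCond I) : ScaleCond I where
  len := p₂.len
  dom := p₂.dom ∪ p₀.dom
  f := fun α i =>
    if i < p₂.len then
      if α ∈ p₂.dom then p₂.f α i
      else if α ∈ p₀.dom then
        if i < p₀.len then p₀.f α i
        else (p₀.dom.filter (fun β => β ∈ J ∧ β ≤ α)).sup (fun β => p₂.f β i)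
      else 0
    else 0
  junk := by
    intro α i h
    rcases h with h | h
    · simp only [Finset.mem_union, not_or] at h
      simp [h.1, h.2]
    · rw [if_neg (by omega)]

theorem scaleSub_regular (J : Set I) : IsRegularSubposet (scaleSub J) := by
  classical
  intro p₀
  refine ⟨p₀.restrictC J, ?_, ?_⟩
  · intro α hα
    simp only [ScaleCond.restrictC, Finset.coe_filter, Set.mem_setOf_eq] at hα
    exact hα.2
  · intro p₂ hp₂ hle
    obtain ⟨hd, hn', hv, hg⟩ := hle
    have hn : p₀.len ≤ p₂.len := hn'
    have hsub : ↑p₂.dom ⊆ J := hp₂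
    -- membership characterization
    have hmem : ∀ α ∈ p₀.dom, (α ∈ p₂.dom ↔ α ∈ J) := by
      intro α hα
      constructor
      · intro h; exact hsub h
      · intro h; exact hd (Finset.mem_filter.2 ⟨hα, h⟩)
    have M : ∀ i, p₀.len ≤ i → i < p₂.len → ∀ β α, β ∈ p₀.dom → β ∈ J →
        α ∈ p₀.dom → α ∈ J → β < α → p₂.f β i ≤ p₂.f α i := by
      intro i hi hi' β α hβ hβJ hα hαJ hβα
      exact hg i hi hi' β (Finset.mem_filter.2 ⟨hβ, hβJ⟩) α (Finset.mem_filter.2 ⟨hα, hαJ⟩) hβα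
    set r := ScaleCond.glue J p₀ p₂ with hr
    have hrlen : r.len = p₂.len := rfl
    have rf_mem : ∀ α ∈ p₂.dom, ∀ i < p₂.len, r.f α i = p₂.f α i := by
      intro α hα i hi
      simp [hr, ScaleCond.glue, hi, hα]
    have rf_low : ∀ α, α ∉ p₂.dom → α ∈ p₀.dom → ∀ i < p₀.len, r.f α i = p₀.f α i := by
      intro α hα2 hα0 i hi
      simp [hr, ScaleCond.glue, hα2, hα0, hi, lt_of_lt_of_le hi hn]
    have rf_out : ∀ α, α ∉ p₂.dom → α ∈ p₀.dom → ∀ i, p₀.len ≤ i → i < p₂.len →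
        r.f α i = (p₀.dom.filter (fun β => β ∈ J ∧ β ≤ α)).sup (fun β => p₂.f β i) := by
      intro α hα2 hα0 i hi hi'
      simp [hr, ScaleCond.glue, hα2, hα0, hi', Nat.not_lt.2 hi]
    refine ⟨r, ⟨Finset.subset_union_left, le_refl _, ?_, ?_⟩, ⟨?_, hn, ?_, ?_⟩⟩
    · intro α hα i hi
      exact rf_mem α hα i hi
    · intro i hi hi' β hβ α hα hβα
      rw [hrlen] at hi'
      omega
    · exact Finset.subset_union_right
    · intro α hα i hi
      by_cases h2 : α ∈ p₂.dom
      · rw [rf_mem α h2 i (lt_of_lt_of_le hi hn)]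
        have := hv α (Finset.mem_filter.2 ⟨hα, (hmem α hα).1 h2⟩) i hi
        rw [this]
        simp only [ScaleCond.restrictC]
        rw [if_pos ((hmem α hα).1 h2)]
      · exact rf_low α h2 hα i hi
    · intro i hi hi' β hβ α hα hβα
      rw [hrlen] at hi'
      by_cases hβ2 : β ∈ p₂.dom <;> by_cases hα2 : α ∈ p₂.dom
      · rw [rf_mem β hβ2 i hi', rf_mem α hα2 i hi']
        exact M i hi hi' β α hβ (hsub hβ2) hα (hsub hα2) hβα
      · rw [rf_mem β hβ2 i hi', rf_out α hα2 hα i hi hi']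
        exact Finset.le_sup (f := fun β => p₂.f β i) (Finset.mem_filter.2 ⟨hβ, hsub hβ2, le_of_lt hβα⟩)
      · rw [rf_out β hβ2 hβ i hi hi', rf_mem α hα2 i hi']
        apply Finset.sup_le
        intro γ hγ
        obtain ⟨hγ0, hγJ, hγβ⟩ := Finset.mem_filter.1 hγ
        exact M i hi hi' γ α hγ0 hγJ hα (hsub hα2) (lt_of_le_of_lt hγβ hβα)
      · rw [rf_out β hβ2 hβ i hi hi', rf_out α hα2 hα i hi hi']
        apply Finset.sup_mono
        intro γ hγ
        obtain ⟨hγ0, hγJ, hγβ⟩ := Finset.mem_filter.1 hγ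
        exact Finset.mem_filter.2 ⟨hγ0, hγJ, le_trans hγβ (le_of_lt hβα)⟩

theorem scaleSub_countable {J : Set I} (hJ : J.Countable) : (scaleSub J).Countable := by
  classical
  set e : ScaleCond I → ℕ × Set I × Set (I × ℕ × ℕ) := fun p =>
    (p.len, ↑p.dom, {x | x.1 ∈ p.dom ∧ x.2.1 < p.len ∧ x.2.2 = p.f x.1 x.2.1}) with he
  have einj : Function.Injective e := by
    intro p q h
    simp only [he, Prod.mk.injEq] at h
    obtain ⟨h1, h2, h3⟩ := h
    have hdom : p.dom = q.dom := Finset.coe_injective h2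
    have hf : p.f = q.f := by
      funext α i
      by_cases hα : α ∈ p.dom
      · by_cases hi : i < p.len
        · have hx : (α, i, p.f α i) ∈ {x : I × ℕ × ℕ | x.1 ∈ p.dom ∧ x.2.1 < p.len ∧ x.2.2 = p.f x.1 x.2.1} :=
            ⟨hα, hi, rfl⟩
          rw [h3] at hx
          exact hx.2.2
        · rw [p.junk α i (Or.inr (by omega)), q.junk α i (Or.inr (by omega))]
      · rw [p.junk α i (Or.inl hα), q.junk α i (Or.inl (hdom ▸ hα))]
    exact ScaleCond.ext h1 hdom hf
  have hT : ((Set.univ : Set ℕ) ×ˢ ({D : Set I | D.Finite ∧ D ⊆ J} ×ˢ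
      {G : Set (I × ℕ × ℕ) | G.Finite ∧ G ⊆ J ×ˢ (Set.univ : Set (ℕ × ℕ))})).Countable :=
    Set.countable_univ.prod ((Set.countable_setOf_finite_subset hJ).prod
      (Set.countable_setOf_finite_subset (hJ.prod Set.countable_univ)))
  refine (hT.preimage einj).mono ?_
  intro p hp
  simp only [Set.mem_preimage, he, Set.mem_prod, Set.mem_setOf_eq]
  refine ⟨Set.mem_univ _, ⟨p.dom.finite_toSet, hp⟩, ?_, ?_⟩
  · have : {x : I × ℕ × ℕ | x.1 ∈ p.dom ∧ x.2.1 < p.len ∧ x.2.2 = p.f x.1 x.2.1} =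
        (fun y : I × ℕ => (y.1, y.2, p.f y.1 y.2)) '' ((↑p.dom : Set I) ×ˢ Set.Iio p.len) := by
      ext ⟨a, i, v⟩
      constructor
      · rintro ⟨h1, h2, h3⟩
        exact ⟨(a, i), ⟨h1, h2⟩, by simp only [Prod.mk.injEq]; exact ⟨trivial, trivial, h3.symm⟩⟩
      · rintro ⟨⟨a', i'⟩, ⟨h1, h2⟩, h3⟩
        obtain ⟨rfl, rfl, rfl⟩ := Prod.mk.injEq .. ▸ h3
        simp only at *
        exact ⟨h1, h2, rfl⟩
    rw [this]
    exact (p.dom.finite_toSet.prod (Set.finite_Iio _)).image _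
  · rintro ⟨a, i, v⟩ ⟨h1, -, -⟩
    exact ⟨hp h1, Set.mem_univ _⟩

/-- The canonical index set of a subposet. -/
def JofR (R : Set (ScaleCond I)) : Set I := ⋃ p ∈ R, ↑p.dom

theorem JofR_scaleSub (J : Set I) : JofR (scaleSub J) = J := by
  apply Set.Subset.antisymm
  · intro α hα
    simp only [JofR, Set.mem_iUnion] at hα
    obtain ⟨p, hp, hα⟩ := hα
    exact hp hα
  · intro α hα
    have hp : (⟨0, {α}, fun _ _ => 0, fun _ _ _ => rfl⟩ : ScaleCond I) ∈ scaleSub J := by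
      intro β hβ
      simp only [Finset.coe_singleton, Set.mem_singleton_iff] at hβ
      exact hβ ▸ hα
    exact Set.mem_biUnion hp (by simp)

theorem JofR_mono {R R' : Set (ScaleCond I)} (h : R ⊆ R') : JofR R ⊆ JofR R' :=
  Set.biUnion_subset_biUnion_left h

theorem chain_finset_subset {𝒟 : Set (Set I)} (hne : 𝒟.Nonempty) (hch : IsChain (· ⊆ ·) 𝒟) :
    ∀ s : Finset I, ↑s ⊆ ⋃₀ 𝒟 → ∃ T ∈ 𝒟, ↑s ⊆ T := by
  classical
  intro s
  induction s using Finset.induction_on with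
  | empty => exact fun _ => ⟨hne.some, hne.some_mem, by simp⟩
  | insert _ _ ha ih =>
    rename_i a s
    intro hs
    have has : (a : I) ∈ ⋃₀ 𝒟 := hs (by simp)
    obtain ⟨T₁, hT₁, haT₁⟩ := has
    obtain ⟨T₂, hT₂, hsT₂⟩ := ih (fun x hx => hs (by simp [hx]))
    rcases eq_or_ne T₁ T₂ with rfl | hne'
    · refine ⟨T₁, hT₁, ?_⟩
      simp only [Finset.coe_insert, Set.insert_subset_iff]
      exact ⟨haT₁, hsT₂⟩
    · rcases hch hT₁ hT₂ hne' with h | h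
      · refine ⟨T₂, hT₂, ?_⟩
        simp only [Finset.coe_insert, Set.insert_subset_iff]
        exact ⟨h haT₁, hsT₂⟩
      · refine ⟨T₁, hT₁, ?_⟩
        simp only [Finset.coe_insert, Set.insert_subset_iff]
        exact ⟨haT₁, hsT₂.trans h⟩

end Aux

theorem stmt4 (I : Type u) [LinearOrder I] : SemiCohenPoset (ScaleCond I) := by
  refine ⟨{R | ∃ J : Set I, J.Countable ∧ R = scaleSub J}, ⟨?_, ?_, ?_⟩, ?_⟩
  · rintro S ⟨J, hJ, rfl⟩
    exact scaleSub_countable hJ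
  · intro 𝒞 hne hcnt hsub hch
    have hJR : ∀ R ∈ 𝒞, R = scaleSub (JofR R) := by
      intro R hR
      obtain ⟨J, hJ, rfl⟩ := hsub hR
      rw [JofR_scaleSub]
    have hJRc : ∀ R ∈ 𝒞, (JofR R).Countable := by
      intro R hR
      obtain ⟨J, hJ, rfl⟩ := hsub hR
      rw [JofR_scaleSub]
      exact hJ
    refine ⟨⋃ R ∈ 𝒞, JofR R, hcnt.biUnion hJRc, ?_⟩
    apply Set.Subset.antisymm
    · rintro p ⟨R, hR, hp⟩
      intro α hα
      exact Set.mem_biUnion hR (Set.mem_biUnion hp hα)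
    · intro p hp
      have hdom : ↑p.dom ⊆ ⋃₀ ((fun R => JofR R) '' 𝒞) := by
        rwa [Set.sUnion_image]
      have hch' : IsChain (· ⊆ ·) ((fun R => JofR R) '' 𝒞) := by
        rintro _ ⟨R, hR, rfl⟩ _ ⟨R', hR', rfl⟩ hne'
        rcases eq_or_ne R R' with rfl | hRR
        · exact absurd rfl hne'
        · exact (hch hR hR' hRR).imp JofR_mono JofR_mono
      obtain ⟨T, hT, hdT⟩ := chain_finset_subset (hne.image _) hch' p.dom hdom
      obtain ⟨R, hR, rfl⟩ := hT
      refine ⟨R, hR, ?_⟩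
      rw [hJR R hR]
      exact hdT
  · intro S hS
    refine ⟨scaleSub (⋃ p ∈ S, ↑p.dom), ⟨_, hS.biUnion (fun p _ => p.dom.finite_toSet.countable),
      rfl⟩, ?_⟩
    intro p hp α hα
    exact Set.mem_biUnion hp hα
  · rintro R ⟨J, hJ, rfl⟩
    exact scaleSub_regular J
end

section
/- For every nonempty linearly ordered set I, the scale poset P(I) has uniform density |I| + ℵ₀. -/
universe u v

/-- `D` is dense below `p` in a poset. -/
def DenseBelowInPoset {P : Type u} [Preorder P] (D : Set P) (p : P) : Prop :=
  ∀ q : P, q ≤ p → ∃ d ∈ D, d ≤ q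

/-- A poset has uniform density `κ` if for every `p` the least cardinality of a set dense
below `p` equals `κ`. -/
def PosetUniformDensity (P : Type u) [Preorder P] (κ : Cardinal.{u}) : Prop :=
  ∀ p : P, sInf {c : Cardinal.{u} | ∃ D : Set P, DenseBelowInPoset D p ∧ Cardinal.mk D = c} = κ


open Cardinal in
lemma scale_mk_le (I : Type u) [LinearOrder I] [Nonempty I] :
    #(ScaleCond I) ≤ #I + ℵ₀ := by
  classical
  set F : ScaleCond I → List I × (ℕ × List (List ℕ)) := fun p =>
    (p.dom.sort (· ≤ ·), (p.len,
      (p.dom.sort (· ≤ ·)).map (fun α => (List.range p.len).map (p.f α)))) with hF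
  have hinj : Function.Injective F := by
    intro p q h
    rw [hF] at h
    simp only [Prod.ext_iff] at h
    obtain ⟨hs, hl, hm⟩ := h
    have hdom : p.dom = q.dom := by
      have := congrArg List.toFinset hs
      simpa [Finset.sort_toFinset] using this
    have hf : p.f = q.f := by
      funext α i
      by_cases hα : α ∈ p.dom
      · by_cases hi : i < p.len
        · rw [← hs] at hm
          have h1 := (List.map_inj_left.mp hm) α
            (by simpa [Finset.mem_sort] using hα)
          rw [← hl] at h1
          exact (List.map_inj_left.mp h1) i (by simpa using hi)
        · rw [p.junk α i (Or.inr (by omega)), q.junk α i (Or.inr (by omega))]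
      · rw [p.junk α i (Or.inl hα), q.junk α i (Or.inl (hdom ▸ hα))]
    exact ScaleCond.ext hl hdom hf
  have hle := mk_le_of_injective hinj
  refine hle.trans ?_
  have h1 : #(List I × (ℕ × List (List ℕ)))
      = #(List I) * Cardinal.lift.{u,0} #(ℕ × List (List ℕ)) := by
    rw [mk_prod, lift_uzero]
  rw [h1]
  have h2 : Cardinal.lift.{u,0} #(ℕ × List (List ℕ)) ≤ ℵ₀ := by
    rw [← lift_aleph0.{u,0}]
    exact Cardinal.lift_le.2 Cardinal.mk_le_aleph0
  have h3 : #(List I) ≤ #I + ℵ₀ := by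
    rw [add_eq_max' le_rfl]
    simpa [max_comm] using mk_list_le_max I
  calc #(List I) * Cardinal.lift.{u,0} #(ℕ × List (List ℕ))
      ≤ (#I + ℵ₀) * ℵ₀ := mul_le_mul' h3 h2
    _ = #I + ℵ₀ := mul_aleph0_eq le_add_self

open Cardinal in
lemma scale_dense_ge (I : Type u) [LinearOrder I] [Nonempty I]
    (p : ScaleCond I) (D : Set (ScaleCond I)) (hD : DenseBelowInPoset D p) :
    Cardinal.mk I + ℵ₀ ≤ #D := by
  classical
  -- every dense set contains conditions of arbitrarily large length
  have hlen : ∀ n : ℕ, ∃ d ∈ D, p.len + n ≤ d.len := by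
    intro n
    set q : ScaleCond I := ⟨p.len + n, p.dom, p.f,
      fun α i h => p.junk α i (h.imp id (fun hi => by omega))⟩ with hq
    have hqp : q ≤ p := by
      refine ⟨Finset.Subset.refl _, Nat.le_add_right _ _, fun α hα i hi => rfl, ?_⟩
      intro i hi hi' β hβ α hα hβα
      rw [show q.f β i = 0 from p.junk β i (Or.inr hi),
        show q.f α i = 0 from p.junk α i (Or.inr hi)]
    obtain ⟨d, hd, hdq⟩ := hD q hqp
    exact ⟨d, hd, hdq.2.1⟩
  have hDinf : Infinite D := by
    rw [Set.infinite_coe_iff]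
    intro hfin
    obtain ⟨N, hN⟩ := (hfin.image ScaleCond.len).bddAbove
    obtain ⟨d, hd, hdl⟩ := hlen (N + 1)
    have := hN (Set.mem_image_of_mem ScaleCond.len hd)
    omega
  -- every α ∈ I appears in the domain of some element of D
  have hdom : ∀ α : I, ∃ d ∈ D, α ∈ d.dom := by
    intro α
    set q : ScaleCond I := ⟨p.len, insert α p.dom, p.f,
      fun β i h => p.junk β i
        (h.imp (fun hb hc => hb (Finset.mem_insert_of_mem hc)) id)⟩ with hq
    have hqp : q ≤ p := by
      refine ⟨Finset.subset_insert _ _, le_rfl, fun β hβ i hi => rfl, ?_⟩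
      intro i hi hi'
      have hql : q.len = p.len := rfl
      omega
    obtain ⟨d, hd, hdq⟩ := hD q hqp
    exact ⟨d, hd, hdq.1 (Finset.mem_insert_self α p.dom)⟩
  choose d hdD hdmem using hdom
  have hginj : Function.Injective
      (fun α : I => ((⟨d α, hdD α⟩ : D),
        List.idxOf α (Finset.sort (d α).dom (· ≤ ·)))) := by
    intro α β h
    simp only [Prod.mk.injEq, Subtype.mk.injEq] at h
    obtain ⟨h1, h2⟩ := h
    rw [h1] at h2
    exact (List.idxOf_inj
      ((Finset.mem_sort _).2 (h1 ▸ hdmem α))).1 h2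
  have hIle : #I ≤ #D := by
    have hle := mk_le_of_injective hginj
    rw [mk_prod, lift_uzero, mk_nat, lift_aleph0,
      mul_aleph0_eq (aleph0_le_mk D)] at hle
    exact hle
  rw [add_eq_max' le_rfl]
  exact sup_le hIle (aleph0_le_mk D)

theorem stmt5 (I : Type u) [LinearOrder I] [Nonempty I] :
    PosetUniformDensity (ScaleCond I) (Cardinal.mk I + Cardinal.aleph0) := by
  intro p
  refine le_antisymm ?_ ?_
  · have hmem : Cardinal.mk (Set.univ : Set (ScaleCond I)) ∈
        {c : Cardinal.{u} | ∃ D : Set (ScaleCond I),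
          DenseBelowInPoset D p ∧ Cardinal.mk D = c} :=
      ⟨Set.univ, fun q _ => ⟨q, trivial, le_refl q⟩, rfl⟩
    refine (csInf_le' hmem).trans ?_
    rw [Cardinal.mk_univ]
    exact scale_mk_le I
  · refine le_csInf ⟨Cardinal.mk (Set.univ : Set (ScaleCond I)),
      Set.univ, fun q _ => ⟨q, trivial, le_refl q⟩, rfl⟩ ?_
    rintro c ⟨D, hDd, rfl⟩
    exact scale_dense_ge I p D hDd
end

section
/- Let I be a linearly ordered set and let F be a filter on the scale poset P(I) such that F meets D_{a,n} = {p : a ⊆ dom(p), n_p ≥ n} for every finite a ⊆ I and n ∈ ℕ, and F meets E_{α,β,n} = {p : α, β ∈ dom(p), n ≤ n_p, and ∃i with n ≤ i < n_p and p(α)(i) < p(β)(i)} for all α < β in I and n ∈ ℕ. Then for each α ∈ I the union f_α = ⋃{p(α) : p ∈ F, α ∈ dom(p)} is a well-defined total function from ℕ to ℕ, and for all α < β in I one has f_α ≪ f_β. -/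
universe u v

/-- A filter on a poset: upward closed and downward directed. -/
def IsPosetFilter {P : Type u} [Preorder P] (F : Set P) : Prop :=
  (∀ p ∈ F, ∀ q, p ≤ q → q ∈ F) ∧ ∀ p ∈ F, ∀ q ∈ F, ∃ r ∈ F, r ≤ p ∧ r ≤ q

/-- `f ≪ g` : `f i ≤ g i` for all but finitely many `i`, and `f i < g i` for infinitely
many `i`. -/
def ScaleLL (f g : ℕ → ℕ) : Prop :=
  (∃ N, ∀ i, N ≤ i → f i ≤ g i) ∧ ∀ N, ∃ i, N ≤ i ∧ f i < g i

theorem stmt7 {I : Type u} [LinearOrder I] (F : Set (ScaleCond I))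
    (hF : IsPosetFilter F)
    (hD : ∀ (a : Finset I) (n : ℕ), ∃ p ∈ F, a ⊆ p.dom ∧ n ≤ p.len)
    (hE : ∀ α β : I, α < β → ∀ n : ℕ, ∃ p ∈ F, α ∈ p.dom ∧ β ∈ p.dom ∧ n ≤ p.len ∧
      ∃ i, n ≤ i ∧ i < p.len ∧ p.f α i < p.f β i) :
    ∃ f : I → ℕ → ℕ,
      (∀ p ∈ F, ∀ α ∈ p.dom, ∀ i < p.len, f α i = p.f α i) ∧
      (∀ α : I, ∀ i : ℕ, ∃ p ∈ F, α ∈ p.dom ∧ i < p.len) ∧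
      ∀ α β : I, α < β → ScaleLL (f α) (f β) := by
  obtain ⟨hup, hdir⟩ := hF
  have coh : ∀ p ∈ F, ∀ q ∈ F, ∀ α, α ∈ p.dom → α ∈ q.dom → ∀ i, i < p.len → i < q.len →
      p.f α i = q.f α i := by
    intro p hp q hq α hαp hαq i hip hiq
    obtain ⟨r, _, hrp, hrq⟩ := hdir p hp q hq
    rw [← hrp.2.2.1 α hαp i hip, ← hrq.2.2.1 α hαq i hiq]
  choose g hgF hgdom hglen using fun α i => hD {α} (i + 1)
  have hmem : ∀ α i, α ∈ (g α i).dom := fun α i =>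
    hgdom α i (Finset.mem_singleton_self α)
  have hlt : ∀ α i, i < (g α i).len := fun α i =>
    lt_of_lt_of_le (Nat.lt_succ_self i) (hglen α i)
  have key : ∀ p ∈ F, ∀ α ∈ p.dom, ∀ i < p.len, (g α i).f α i = p.f α i := by
    intro p hp α hα i hi
    exact coh (g α i) (hgF α i) p hp α (hmem α i) hα i (hlt α i) hi
  refine ⟨fun α i => (g α i).f α i, key, fun α i => ⟨g α i, hgF α i, hmem α i, hlt α i⟩, ?_⟩
  intro α β hαβ
  constructor
  · obtain ⟨p, hp, hsub, -⟩ := hD {α, β} 0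
    have hαp : α ∈ p.dom := hsub (by simp)
    have hβp : β ∈ p.dom := hsub (by simp)
    refine ⟨p.len, fun i hi => ?_⟩
    obtain ⟨q, hq, hsub', hlen'⟩ := hD {α, β} (i + 1)
    obtain ⟨r, hr, hrp, hrq⟩ := hdir p hp q hq
    have hir : i < r.len := lt_of_lt_of_le (Nat.lt_of_lt_of_le (Nat.lt_succ_self i) hlen')
      hrq.2.1
    have hmono := hrp.2.2.2 i hi hir α hαp β hβp hαβ
    show (g α i).f α i ≤ (g β i).f β i
    rw [key r hr α (hrp.1 hαp) i hir, key r hr β (hrp.1 hβp) i hir]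
    exact hmono
  · intro N
    obtain ⟨p, hp, hαp, hβp, -, i, hNi, hip, hfab⟩ := hE α β hαβ N
    refine ⟨i, hNi, ?_⟩
    show (g α i).f α i < (g β i).f β i
    rw [key p hp α hαp i hip, key p hp β hβp i hip]
    exact hfab
end

section
/- Let I be a set and J ⊆ I. Then P_ed(J), identified with {p ∈ P_ed(I) : dom(p) ⊆ J}, is a regular subposet of the eventually-different poset P_ed(I). -/
universe u v

/-- A condition in the eventually-different poset over `I`. -/
@[ext] structure EDCond (I : Type u) : Type u where
  len : ℕ
  dom : Finset I
  f : I → ℕ → ℕ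
  junk : ∀ α i, α ∉ dom ∨ len ≤ i → f α i = 0

/-- The order of the eventually-different poset. -/
instance EDCond.instPartialOrder (I : Type u) : PartialOrder (EDCond I) where
  le p q := q.dom ⊆ p.dom ∧ q.len ≤ p.len ∧
    (∀ α ∈ q.dom, ∀ i < q.len, p.f α i = q.f α i) ∧
    (∀ i, q.len ≤ i → i < p.len → ∀ α ∈ q.dom, ∀ β ∈ q.dom, α ≠ β → p.f α i ≠ p.f β i)
  le_refl p := ⟨Finset.Subset.refl _, le_refl _, fun _ _ _ _ => rfl,
    fun i hi hi' => absurd hi' (by omega)⟩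
  le_trans p q r hpq hqr := by
    obtain ⟨hd1, hn1, hv1, hg1⟩ := hpq
    obtain ⟨hd2, hn2, hv2, hg2⟩ := hqr
    refine ⟨hd2.trans hd1, hn2.trans hn1, ?_, ?_⟩
    · intro α hα i hi
      rw [hv1 α (hd2 hα) i (lt_of_lt_of_le hi hn2), hv2 α hα i hi]
    · intro i hi hi' α hα β hβ hαβ
      by_cases hq : i < q.len
      · rw [hv1 α (hd2 hα) i hq, hv1 β (hd2 hβ) i hq]
        exact hg2 i hi hq α hα β hβ hαβ
      · exact hg1 i (by omega) hi' α (hd2 hα) β (hd2 hβ) hαβ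
  le_antisymm p q hpq hqp := by
    obtain ⟨hd1, hn1, hv1, -⟩ := hpq
    obtain ⟨hd2, hn2, hv2, -⟩ := hqp
    have hdom : p.dom = q.dom := Finset.Subset.antisymm hd2 hd1
    have hlen : p.len = q.len := le_antisymm hn2 hn1
    have hf : p.f = q.f := by
      funext α i
      by_cases hα : α ∈ q.dom
      · by_cases hi : i < q.len
        · exact hv1 α hα i hi
        · rw [p.junk α i (Or.inr (by omega)), q.junk α i (Or.inr (by omega))]
      · rw [p.junk α i (Or.inl (hdom ▸ hα)), q.junk α i (Or.inl hα)]
    exact EDCond.ext hlen hdom hf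

theorem stmt8 {I : Type u} (J : Set I) :
    IsRegularSubposet {p : EDCond I | ↑p.dom ⊆ J} := by
  classical
  intro p₀
  set D : Finset I := p₀.dom.filter (· ∈ J) with hD
  have hDsub : D ⊆ p₀.dom := Finset.filter_subset _ _
  refine ⟨⟨p₀.len, D, fun α i => if α ∈ D then p₀.f α i else 0, ?_⟩, ?_, ?_⟩
  · intro α i h
    rcases h with h | h
    · simp [h]
    · by_cases hα : α ∈ D
      · simp only [hα, if_true]
        exact p₀.junk α i (Or.inr h)
      · simp [hα]
  · intro α hα
    simp only [Finset.coe_filter, Set.mem_setOf_eq, hD] at hα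
    exact hα.2
  · intro p₂ hp₂ hle
    obtain ⟨hd, hn, hv, hg⟩ := hle
    simp only at hd hn hv hg
    -- fresh values
    set s : Finset I := p₀.dom \ p₂.dom with hs
    set e := s.equivFin with he
    set idx : I → ℕ := fun α => if h : α ∈ s then (e ⟨α, h⟩ : ℕ) else 0 with hidx
    have hidxinj : ∀ α ∈ s, ∀ β ∈ s, idx α = idx β → α = β := by
      intro α hα β hβ h
      simp only [hidx, dif_pos hα, dif_pos hβ] at h
      have : (⟨α, hα⟩ : {x // x ∈ s}) = ⟨β, hβ⟩ := e.injective (Fin.ext h)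
      exact congrArg Subtype.val this
    set B : ℕ := (p₂.dom.sup fun β => (Finset.range p₂.len).sup (p₂.f β)) + 1 with hB
    have hBval : ∀ β ∈ p₂.dom, ∀ i < p₂.len, p₂.f β i < B := by
      intro β hβ i hi
      have h1 : p₂.f β i ≤ (Finset.range p₂.len).sup (p₂.f β) :=
        Finset.le_sup (Finset.mem_range.mpr hi)
      have h2 : (Finset.range p₂.len).sup (p₂.f β) ≤
          p₂.dom.sup fun β => (Finset.range p₂.len).sup (p₂.f β) :=
        Finset.le_sup (f := fun β => (Finset.range p₂.len).sup (p₂.f β)) hβ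
      omega
    -- common extension
    refine ⟨⟨p₂.len, p₂.dom ∪ p₀.dom,
      fun α i => if α ∈ p₂.dom then p₂.f α i else
        if α ∈ p₀.dom ∧ i < p₂.len then
          (if i < p₀.len then p₀.f α i else B + idx α) else 0, ?_⟩, ?_, ?_⟩
    · intro α i h
      rcases h with h | h
      · simp only [Finset.mem_union, not_or] at h
        simp [h.1, h.2]
      · by_cases h2 : α ∈ p₂.dom
        · simp only [h2, if_true]
          exact p₂.junk α i (Or.inr h)
        · simp only [h2, if_false]
          rw [if_neg]
          rintro ⟨-, hlt⟩
          omega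
    -- r ≤ p₂
    · refine ⟨Finset.subset_union_left, le_refl _, ?_, ?_⟩
      · intro α hα i hi
        simp [hα]
      · intro i hi hi'
        replace hi' : i < p₂.len := hi'
        omega
    -- r ≤ p₀
    · have hmem : ∀ α ∈ p₀.dom, α ∈ p₂.dom → α ∈ D := by
        intro α hα hα2
        simp only [hD, Finset.mem_filter]
        exact ⟨hα, hp₂ hα2⟩
      refine ⟨Finset.subset_union_right, hn, ?_, ?_⟩
      · intro α hα i hi
        simp only
        by_cases h2 : α ∈ p₂.dom
        · rw [if_pos h2, hv α (hmem α hα h2) i hi]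
          simp [hmem α hα h2]
        · rw [if_neg h2, if_pos ⟨hα, by omega⟩, if_pos hi]
      · intro i hi hi' α hα β hβ hαβ
        replace hi' : i < p₂.len := hi'
        simp only
        by_cases h2 : α ∈ p₂.dom <;> by_cases h3 : β ∈ p₂.dom
        · rw [if_pos h2, if_pos h3]
          exact hg i hi hi' α (hmem α hα h2) β (hmem β hβ h3) hαβ
        · rw [if_pos h2, if_neg h3, if_pos ⟨hβ, hi'⟩, if_neg (show ¬ i < p₀.len by omega)]
          have := hBval α h2 i hi'
          omega
        · rw [if_neg h2, if_pos h3, if_pos ⟨hα, hi'⟩, if_neg (show ¬ i < p₀.len by omega)]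
          have := hBval β h3 i hi'
          omega
        · rw [if_neg h2, if_neg h3, if_pos ⟨hα, hi'⟩,
            if_neg (show ¬ i < p₀.len by omega), if_pos ⟨hβ, hi'⟩,
            if_neg (show ¬ i < p₀.len by omega)]
          intro h
          have h' : idx α = idx β := by omega
          exact hαβ (hidxinj α (Finset.mem_sdiff.mpr ⟨hα, h2⟩)
            β (Finset.mem_sdiff.mpr ⟨hβ, h3⟩) h')
end

section
/- For every set I, the eventually-different poset P_ed(I) is a semi-Cohen poset. -/
universe u v

/-! Auxiliary material -/

/-- The set of conditions whose domain lies in `J`. -/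
def EDsub {I : Type u} (J : Set I) : Set (EDCond I) := {p | ↑p.dom ⊆ J}

/-- A trivial condition with domain `{α}`. -/
def EDsingle {I : Type u} (α : I) : EDCond I :=
  ⟨0, {α}, fun _ _ => 0, fun _ _ _ => rfl⟩

/-- The union of domains of conditions in a set. -/
def EDJof {I : Type u} (S : Set (EDCond I)) : Set I := ⋃ p ∈ S, (↑p.dom : Set I)

lemma EDJof_EDsub {I : Type u} (J : Set I) : EDJof (EDsub J) = J := by
  apply Set.Subset.antisymm
  · intro α hα
    simp only [EDJof, Set.mem_iUnion] at hα
    obtain ⟨p, hp, hα⟩ := hα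
    exact hp hα
  · intro α hα
    have h1 : EDsingle α ∈ EDsub J := by
      intro β hβ
      simp only [EDsingle, Finset.coe_singleton, Set.mem_singleton_iff] at hβ
      subst hβ; exact hα
    exact Set.mem_biUnion h1 (by simp [EDsingle])

lemma EDJof_mono {I : Type u} {S T : Set (EDCond I)} (h : S ⊆ T) : EDJof S ⊆ EDJof T :=
  Set.biUnion_subset_biUnion_left h

lemma EDJof_countable {I : Type u} {S : Set (EDCond I)} (h : S.Countable) :
    (EDJof S).Countable :=
  h.biUnion (fun p _ => p.dom.finite_toSet.countable)

lemma EDsub_countable {I : Type u} {J : Set I} (hJ : J.Countable) :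
    (EDsub J).Countable := by
  classical
  -- encode a condition
  let enc : EDCond I → ℕ × Set I × Set (I × ℕ × ℕ) := fun p =>
    (p.len, ↑p.dom, {x | x.1 ∈ p.dom ∧ x.2.1 < p.len ∧ x.2.2 = p.f x.1 x.2.1})
  have hinj : Function.Injective enc := by
    intro p q h
    simp only [enc, Prod.mk.injEq] at h
    obtain ⟨hlen, hdom, hgr⟩ := h
    have hdom' : p.dom = q.dom := Finset.coe_injective hdom
    refine EDCond.ext hlen hdom' ?_
    funext α i
    by_cases hα : α ∈ p.dom
    · by_cases hi : i < p.len
      · have : (α, i, p.f α i) ∈ {x : I × ℕ × ℕ | x.1 ∈ p.dom ∧ x.2.1 < p.len ∧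
            x.2.2 = p.f x.1 x.2.1} := ⟨hα, hi, rfl⟩
        rw [hgr] at this
        exact this.2.2
      · rw [p.junk α i (Or.inr (by omega)), q.junk α i (Or.inr (by omega))]
    · rw [p.junk α i (Or.inl hα), q.junk α i (Or.inl (hdom' ▸ hα))]
  have hT : ((Set.univ : Set ℕ) ×ˢ ({t : Set I | t.Finite ∧ t ⊆ J} ×ˢ
      {t : Set (I × ℕ × ℕ) | t.Finite ∧ t ⊆ J ×ˢ (Set.univ : Set (ℕ × ℕ))})).Countable := by
    refine Set.Countable.prod Set.countable_univ (Set.Countable.prod ?_ ?_)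
    · exact Set.countable_setOf_finite_subset hJ
    · exact Set.countable_setOf_finite_subset (hJ.prod Set.countable_univ)
  have hsub : EDsub J ⊆ enc ⁻¹' (Set.univ ×ˢ ({t : Set I | t.Finite ∧ t ⊆ J} ×ˢ
      {t : Set (I × ℕ × ℕ) | t.Finite ∧ t ⊆ J ×ˢ (Set.univ : Set (ℕ × ℕ))})) := by
    intro p hp
    refine ⟨Set.mem_univ _, ⟨p.dom.finite_toSet, hp⟩, ?_, ?_⟩
    · have : {x : I × ℕ × ℕ | x.1 ∈ p.dom ∧ x.2.1 < p.len ∧ x.2.2 = p.f x.1 x.2.1} ⊆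
          ↑p.dom ×ˢ ((Finset.range p.len : Finset ℕ) : Set ℕ) ×ˢ
            ↑(Finset.image₂ p.f p.dom (Finset.range p.len)) := by
        rintro ⟨α, i, v⟩ ⟨h1, h2, h3⟩
        refine ⟨h1, by simpa using h2, ?_⟩
        simp only [Finset.coe_image₂, Set.mem_image2]
        exact ⟨α, h1, i, by simpa using h2, h3.symm⟩
      exact Set.Finite.subset (by
        apply Set.Finite.prod p.dom.finite_toSet
        exact Set.Finite.prod (Finset.range p.len).finite_toSet
          (Finset.image₂ p.f p.dom (Finset.range p.len)).finite_toSet) this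
    · rintro ⟨α, i, v⟩ ⟨h1, _, _⟩
      exact ⟨hp h1, Set.mem_univ _⟩
  exact Set.Countable.mono hsub (hT.preimage hinj)

lemma EDsub_regular {I : Type u} (J : Set I) : IsRegularSubposet (EDsub J) := by
  classical
  intro p₀
  -- the restriction of p₀ to J
  set D₁ : Finset I := p₀.dom.filter (· ∈ J) with hD₁
  refine ⟨⟨p₀.len, D₁, fun α i => if α ∈ D₁ ∧ i < p₀.len then p₀.f α i else 0, ?_⟩, ?_, ?_⟩
  · intro α i h
    rcases h with h | h
    · simp [h]
    · simp only [ite_eq_right_iff, and_imp]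
      intro _ h'; omega
  · intro α hα
    simp only [hD₁, Finset.coe_filter, Set.mem_setOf_eq] at hα
    exact hα.2
  · rintro p₂ hp₂ ⟨hd, hn, hv, hg⟩
    simp only at hd hn hv hg
    -- p₂ extends the restriction; build a common lower bound of p₂ and p₀
    have hD₁sub : D₁ ⊆ p₀.dom := Finset.filter_subset _ _
    have hcap : ∀ α, α ∈ p₀.dom → α ∈ p₂.dom → α ∈ D₁ := by
      intro α h0 h2
      simp only [hD₁, Finset.mem_filter]
      exact ⟨h0, hp₂ h2⟩
    set N : ℕ → ℕ := fun i => (p₂.dom.sup fun β => p₂.f β i) + 1 with hN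
    set idx : I → ℕ := fun α => p₀.dom.toList.idxOf α with hidx
    have hidx_inj : ∀ α ∈ p₀.dom, ∀ β ∈ p₀.dom, idx α = idx β → α = β := by
      intro α hα β hβ h
      exact (List.idxOf_inj (l := p₀.dom.toList) (by simpa using hα)).mp h
    set rf : I → ℕ → ℕ := fun α i =>
      if α ∈ p₂.dom then p₂.f α i
      else if α ∈ p₀.dom then
        (if i < p₀.len then p₀.f α i else if i < p₂.len then N i + idx α else 0)
      else 0 with hrf
    have hNgt : ∀ i, ∀ β ∈ p₂.dom, p₂.f β i < N i := by
      intro i β hβ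
      have h : p₂.f β i ≤ p₂.dom.sup (fun b => p₂.f b i) := by
        exact Finset.le_sup (f := fun b => p₂.f b i) hβ
      simp only [hN]
      omega
    refine ⟨⟨p₂.len, p₂.dom ∪ p₀.dom, rf, ?_⟩, ⟨?_, ?_, ?_, ?_⟩, ⟨?_, ?_, ?_, ?_⟩⟩
    · -- junk
      intro α i h
      rcases h with h | h
      · simp only [Finset.mem_union, not_or] at h
        simp [hrf, h.1, h.2]
      · simp only [hrf]
        by_cases h2 : α ∈ p₂.dom
        · simp only [h2, if_true]
          exact p₂.junk α i (Or.inr h)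
        · simp only [h2, if_false]
          by_cases h0 : α ∈ p₀.dom
          · simp only [h0, if_true]
            have : ¬ i < p₀.len := by omega
            have : ¬ i < p₂.len := by omega
            split <;> [omega; skip]
            simp [this]
          · simp [h0]
    -- r ≤ p₂
    · exact Finset.subset_union_left
    · exact le_refl _
    · intro α hα i _
      simp [hrf, hα]
    · intro i h1 h2; exact absurd h2 (not_lt.mpr h1)
    -- r ≤ p₀
    · exact Finset.subset_union_right
    · exact hn
    · intro α hα i hi
      simp only [hrf]
      by_cases h2 : α ∈ p₂.dom
      · simp only [h2, if_true]
        have hαD : α ∈ D₁ := hcap α hα h2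
        rw [hv α hαD i hi]
        simp [hαD, hi]
      · simp [h2, hα, hi]
    · intro i hi hi' α hα β hβ hαβ
      simp only [hrf]
      have hnotlt : ¬ i < p₀.len := by omega
      by_cases h2α : α ∈ p₂.dom <;> by_cases h2β : β ∈ p₂.dom
      · simp only [h2α, h2β, if_true]
        exact hg i hi hi' α (hcap α hα h2α) β (hcap β hβ h2β) hαβ
      · simp only [h2α, h2β, if_true, if_false, hβ, hnotlt, hi']
        have := hNgt i α h2α
        omega
      · simp only [h2α, h2β, if_true, if_false, hα, hnotlt, hi']
        have := hNgt i β h2β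
        omega
      · simp only [h2α, h2β, if_false, hα, hβ, hnotlt, hi', if_true]
        intro h
        exact hαβ (hidx_inj α hα β hβ (by omega))

theorem stmt9 (I : Type u) : SemiCohenPoset (EDCond I) := by
  classical
  refine ⟨{S | ∃ J : Set I, J.Countable ∧ S = EDsub J}, ⟨?_, ?_, ?_⟩, ?_⟩
  · rintro S ⟨J, hJ, rfl⟩
    exact EDsub_countable hJ
  · rintro 𝒞 hne hcnt hsub hchain
    refine ⟨⋃ S ∈ 𝒞, EDJof S, ?_, ?_⟩
    · refine Set.Countable.biUnion hcnt ?_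
      rintro S hS
      obtain ⟨J, hJ, rfl⟩ := hsub hS
      rw [EDJof_EDsub]
      exact hJ
    · apply Set.Subset.antisymm
      · rintro p ⟨S, hS, hp⟩
        intro α hα
        exact Set.mem_biUnion hS (Set.mem_biUnion hp hα)
      · intro p hp
        -- find a single S containing all of p.dom's witnesses
        have key : ∀ d : Finset I, (↑d : Set I) ⊆ ⋃ S ∈ 𝒞, EDJof S →
            ∃ S ∈ 𝒞, (↑d : Set I) ⊆ EDJof S := by
          intro d
          induction d using Finset.induction_on with
          | empty =>
            intro _
            obtain ⟨S, hS⟩ := hne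
            exact ⟨S, hS, by simp⟩
          | @insert α d _ ih =>
            intro h
            have hα : α ∈ ⋃ S ∈ 𝒞, EDJof S := h (by simp)
            obtain ⟨S₁, hS₁, hα₁⟩ := Set.mem_iUnion₂.mp hα
            obtain ⟨S₂, hS₂, hd₂⟩ := ih (fun x hx => h (by simp [Finset.mem_insert]; right; exact hx))
            rcases eq_or_ne S₁ S₂ with rfl | hne'
            · refine ⟨S₁, hS₁, ?_⟩
              intro x hx
              simp only [Finset.coe_insert, Set.mem_insert_iff] at hx
              rcases hx with rfl | hx
              · exact hα₁
              · exact hd₂ hx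
            · rcases hchain hS₁ hS₂ hne' with hle | hle
              · refine ⟨S₂, hS₂, ?_⟩
                intro x hx
                simp only [Finset.coe_insert, Set.mem_insert_iff] at hx
                rcases hx with rfl | hx
                · exact EDJof_mono hle hα₁
                · exact hd₂ hx
              · refine ⟨S₁, hS₁, ?_⟩
                intro x hx
                simp only [Finset.coe_insert, Set.mem_insert_iff] at hx
                rcases hx with rfl | hx
                · exact hα₁
                · exact EDJof_mono hle (hd₂ hx)
        obtain ⟨S, hS, hdS⟩ := key p.dom hp
        refine Set.mem_sUnion.mpr ⟨S, hS, ?_⟩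
        obtain ⟨J, hJ, rfl⟩ := hsub hS
        rw [EDJof_EDsub] at hdS
        exact hdS
  · intro S hS
    refine ⟨EDsub (EDJof S), ⟨EDJof S, EDJof_countable hS, rfl⟩, ?_⟩
    intro p hp
    exact fun α hα => Set.mem_biUnion hp hα
  · rintro R ⟨J, _, rfl⟩
    exact EDsub_regular J
end

section
/- For every nonempty set I, the eventually-different poset P_ed(I) has uniform density |I| + ℵ₀. -/
universe u v

section Aux

variable {I : Type u}

open Classical in
private noncomputable def edExt (p : EDCond I) (n : ℕ) : I → ℕ → ℕ := fun α i =>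
  if i < p.len then p.f α i
  else if h : α ∈ p.dom ∧ i < max p.len n then (p.dom.equivFin ⟨α, h.1⟩ : Fin _).val
  else 0

/-- Any condition can be extended in length. -/
lemma EDCond.exists_le_len (p : EDCond I) (n : ℕ) :
    ∃ q : EDCond I, q ≤ p ∧ n ≤ q.len := by
  classical
  refine ⟨⟨max p.len n, p.dom, edExt p n, ?_⟩,
    ⟨Finset.Subset.refl _, le_max_left _ _, ?_, ?_⟩, le_max_right _ _⟩
  · rintro α i h
    simp only [edExt]
    split
    · rename_i hi
      rcases h with hα | hi2
      · exact p.junk α i (Or.inl hα)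
      · omega
    · split
      · rename_i hmem
        rcases h with hα | hi2
        · exact absurd hmem.1 hα
        · omega
      · rfl
  · intro α hα i hi
    simp only [edExt]
    rw [if_pos hi]
  · intro i hi hi' α hα β hβ hαβ h
    simp only [edExt] at h
    rw [if_neg (not_lt.mpr hi), if_neg (not_lt.mpr hi),
      dif_pos ⟨hα, hi'⟩, dif_pos ⟨hβ, hi'⟩] at h
    exact hαβ (Subtype.ext_iff.mp (p.dom.equivFin.injective (Fin.val_injective h)))

/-- Any condition can be extended to have a given element in its domain. -/
lemma EDCond.exists_le_mem_dom (p : EDCond I) (α : I) :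
    ∃ q : EDCond I, q ≤ p ∧ α ∈ q.dom := by
  classical
  refine ⟨⟨p.len, insert α p.dom, p.f, ?_⟩,
    ⟨Finset.subset_insert _ _, le_refl _, fun _ _ _ _ => rfl,
      fun i hi hi' => absurd hi' (not_lt.mpr hi)⟩, Finset.mem_insert_self _ _⟩
  rintro β i (hβ | hi)
  · exact p.junk β i (Or.inl fun h => hβ (Finset.mem_insert_of_mem h))
  · exact p.junk β i (Or.inr hi)

lemma EDCond.mk_le (I : Type u) [Nonempty I] :
    Cardinal.mk (EDCond I) ≤ Cardinal.mk I + Cardinal.aleph0 := by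
  classical
  set κ := Cardinal.mk I + Cardinal.aleph0 with hκ
  have hκinf : Cardinal.aleph0 ≤ κ := le_add_self
  have hIκ : Cardinal.mk I ≤ κ := self_le_add_right _ _
  have hinj : Function.Injective (fun p : EDCond I =>
      ((p.len, p.dom, (p.dom ×ˢ Finset.range p.len).image
        (fun x => (x.1, x.2, p.f x.1 x.2))) : ℕ × Finset I × Finset (I × ℕ × ℕ))) := by
    intro p q h
    simp only [Prod.mk.injEq] at h
    obtain ⟨hlen, hdom, hgr⟩ := h
    refine EDCond.ext hlen hdom ?_
    funext β i
    by_cases hβ : β ∈ p.dom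
    · by_cases hi : i < p.len
      · have hmem : (β, i, p.f β i) ∈ (q.dom ×ˢ Finset.range q.len).image
            (fun x : I × ℕ => (x.1, x.2, q.f x.1 x.2)) := by
          rw [← hgr]
          refine Finset.mem_image.mpr ⟨(β, i), ?_, rfl⟩
          simp [hβ, hi]
        obtain ⟨⟨γ, j⟩, -, heq⟩ := Finset.mem_image.mp hmem
        simp only [Prod.mk.injEq] at heq
        obtain ⟨h1, h2, h3⟩ := heq
        subst h1; subst h2; exact h3.symm
      · rw [p.junk β i (Or.inr (by omega)), q.junk β i (Or.inr (by omega))]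
    · rw [p.junk β i (Or.inl hβ), q.junk β i (Or.inl (hdom ▸ hβ))]
  have h1 : Cardinal.mk (EDCond I) ≤ Cardinal.mk (ℕ × Finset I × Finset (I × ℕ × ℕ)) :=
    Cardinal.mk_le_of_injective hinj
  refine h1.trans ?_
  have hB : Cardinal.mk (Finset (I × ℕ × ℕ)) ≤ κ := by
    rw [Cardinal.mk_finset_of_infinite]
    have heq : Cardinal.mk (I × ℕ × ℕ) = Cardinal.mk I * Cardinal.aleph0 := by
      simp [Cardinal.mk_prod, Cardinal.aleph0_mul_aleph0, mul_assoc]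
    rw [heq]
    calc Cardinal.mk I * Cardinal.aleph0 ≤ κ * κ := mul_le_mul' hIκ hκinf
    _ = κ := Cardinal.mul_eq_self hκinf
  have hA : Cardinal.mk (Finset I) ≤ κ := by
    have : Function.Injective (fun s : Finset I =>
        Finset.map ⟨fun α => ((α, 0, 0) : I × ℕ × ℕ), fun a b h => (Prod.mk.injEq .. ▸ h).1⟩ s) :=
      Finset.map_injective _
    exact (Cardinal.mk_le_of_injective this).trans hB
  rw [Cardinal.mk_prod, Cardinal.mk_prod]
  simp only [Cardinal.mk_nat, Cardinal.lift_id, Cardinal.lift_aleph0, Cardinal.lift_uzero]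
  calc Cardinal.aleph0 * (Cardinal.mk (Finset I) * Cardinal.mk (Finset (I × ℕ × ℕ)))
      ≤ κ * (κ * κ) := mul_le_mul' hκinf (mul_le_mul' hA hB)
    _ = κ := by rw [Cardinal.mul_eq_self hκinf, Cardinal.mul_eq_self hκinf]

end Aux

theorem stmt10 (I : Type u) [Nonempty I] :
    PosetUniformDensity (EDCond I) (Cardinal.mk I + Cardinal.aleph0) := by
  classical
  intro p
  set κ := Cardinal.mk I + Cardinal.aleph0 with hκ
  have hκinf : Cardinal.aleph0 ≤ κ := le_add_self
  set S := {c : Cardinal.{u} | ∃ D : Set (EDCond I), DenseBelowInPoset D p ∧ Cardinal.mk D = c}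
    with hS
  have hmem : Cardinal.mk (EDCond I) ∈ S := by
    refine ⟨Set.univ, fun q hq => ⟨q, Set.mem_univ _, le_refl _⟩, ?_⟩
    exact Cardinal.mk_univ
  apply le_antisymm
  · exact (csInf_le (OrderBot.bddBelow _) hmem).trans (EDCond.mk_le I)
  · refine le_csInf ⟨_, hmem⟩ ?_
    rintro c ⟨D, hD, rfl⟩
    -- D is infinite
    have hinf : D.Infinite := by
      by_contra hfin
      rw [Set.not_infinite] at hfin
      obtain ⟨N, hN⟩ := (hfin.image (fun d => d.len)).bddAbove
      obtain ⟨q, hqp, hqlen⟩ := p.exists_le_len (N + 1)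
      obtain ⟨d, hdD, hdq⟩ := hD q hqp
      have : d.len ≤ N := hN ⟨d, hdD, rfl⟩
      have : q.len ≤ d.len := hdq.2.1
      omega
    have haleph : Cardinal.aleph0 ≤ Cardinal.mk D := by
      have : Infinite D := hinf.to_subtype
      exact Cardinal.infinite_iff.mp this
    -- mk I ≤ mk D
    have hIle : Cardinal.mk I ≤ Cardinal.mk D := by
      have hex : ∀ α : I, ∃ d : D, α ∈ (d : EDCond I).dom := by
        intro α
        obtain ⟨q, hqp, hα⟩ := p.exists_le_mem_dom α
        obtain ⟨d, hdD, hdq⟩ := hD q hqp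
        exact ⟨⟨d, hdD⟩, hdq.1 hα⟩
      choose F hF using hex
      have hfib : ∀ d : D, Cardinal.mk (F ⁻¹' {d}) ≤ Cardinal.aleph0 := by
        intro d
        have hsub : F ⁻¹' {d} ⊆ (↑(d : EDCond I).dom : Set I) := by
          intro α hα
          have := hF α
          rw [Set.mem_preimage, Set.mem_singleton_iff] at hα
          rw [hα] at this
          exact this
        have : (F ⁻¹' {d}).Finite := Set.Finite.subset (Finset.finite_toSet _) hsub
        have : Finite (F ⁻¹' {d}) := this.to_subtype
        exact (Cardinal.lt_aleph0_of_finite _).le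
      calc Cardinal.mk I ≤ Cardinal.mk D * Cardinal.aleph0 :=
            Cardinal.mk_le_mk_mul_of_mk_preimage_le F hfib
        _ = Cardinal.mk D := Cardinal.mul_aleph0_eq haleph
    show Cardinal.mk I + Cardinal.aleph0 ≤ Cardinal.mk ↥D
    rw [Cardinal.add_eq_max' (le_refl Cardinal.aleph0)]
    exact max_le hIle haleph
end

section
/- Let I be a set and let F be a filter on the eventually-different poset P_ed(I) such that F meets D_{a,n} = {p : a ⊆ dom(p), n_p ≥ n} for every finite a ⊆ I and every n ∈ ℕ. Then for each α ∈ I the union f_α = ⋃{p(α) : p ∈ F, α ∈ dom(p)} is a well-defined total function from ℕ to ℕ, and for all α ≠ β in I one has f_α(i) ≠ f_β(i) for all but finitely many i ∈ ℕ. -/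
universe u v

theorem stmt11 {I : Type u} (F : Set (EDCond I)) (hF : IsPosetFilter F)
    (hD : ∀ (a : Finset I) (n : ℕ), ∃ p ∈ F, a ⊆ p.dom ∧ n ≤ p.len) :
    ∃ f : I → ℕ → ℕ,
      (∀ p ∈ F, ∀ α ∈ p.dom, ∀ i < p.len, f α i = p.f α i) ∧
      (∀ α : I, ∀ i : ℕ, ∃ p ∈ F, α ∈ p.dom ∧ i < p.len) ∧
      ∀ α β : I, α ≠ β → ∃ N, ∀ i, N ≤ i → f α i ≠ f β i := by
  obtain ⟨hup, hdir⟩ := hF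
  -- compatibility of values across conditions in F
  have compat : ∀ p ∈ F, ∀ q ∈ F, ∀ α, α ∈ p.dom → α ∈ q.dom →
      ∀ i, i < p.len → i < q.len → p.f α i = q.f α i := by
    intro p hp q hq α hαp hαq i hip hiq
    obtain ⟨r, hr, hrp, hrq⟩ := hdir p hp q hq
    rw [← hrp.2.2.1 α hαp i hip, ← hrq.2.2.1 α hαq i hiq]
  have hmeet : ∀ (α : I) (i : ℕ), ∃ p ∈ F, α ∈ p.dom ∧ i < p.len := by
    intro α i
    obtain ⟨p, hp, hdom, hlen⟩ := hD {α} (i + 1)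
    exact ⟨p, hp, hdom (Finset.mem_singleton_self α), by omega⟩
  classical
  refine ⟨fun α i => ((hmeet α i).choose).f α i, ?_, hmeet, ?_⟩
  · intro p hp α hα i hi
    obtain ⟨hq, hαq, hiq⟩ := (hmeet α i).choose_spec
    exact compat _ hq p hp α hαq hα i hiq hi
  · intro α β hαβ
    obtain ⟨p, hp, hdom, -⟩ := hD {α, β} 0
    refine ⟨p.len, fun i hi => ?_⟩
    have hαp : α ∈ p.dom := hdom (by simp)
    have hβp : β ∈ p.dom := hdom (by simp)
    obtain ⟨q, hq, hdomq, hlenq⟩ := hD {α, β} (i + 1)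
    have hαq : α ∈ q.dom := hdomq (by simp)
    have hβq : β ∈ q.dom := hdomq (by simp)
    obtain ⟨r, hr, hrp, hrq⟩ := hdir p hp q hq
    have hir : i < r.len := lt_of_lt_of_le (by omega) hrq.2.1
    have hne : r.f α i ≠ r.f β i :=
      hrp.2.2.2 i hi hir α hαp β hβp hαβ
    obtain ⟨h1, hα1, hi1⟩ := (hmeet α i).choose_spec
    obtain ⟨h2, hβ2, hi2⟩ := (hmeet β i).choose_spec
    show (hmeet α i).choose.f α i ≠ (hmeet β i).choose.f β i
    rw [compat _ h1 r hr α hα1 (hrp.1 hαp) i hi1 hir,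
        compat _ h2 r hr β hβ2 (hrp.1 hβp) i hi2 hir]
    exact hne
end

section
/- Let Λ be a set and (f_γ)_{γ∈Λ} a family of functions ℕ → ℕ that is pairwise eventually different, i.e., for γ ≠ δ one has f_γ(i) ≠ f_δ(i) for all but finitely many i. Then the poset Q = {(s,a) : s ∈ ℕ^{<ω}, a a finite subset of Λ}, ordered by (s₁,a₁) ≤ (s₀,a₀) iff s₀ is an initial segment of s₁, a₀ ⊆ a₁, and for every i ∈ dom(s₁)∖dom(s₀) and every γ ∈ a₀ one has s₁(i) ≠ f_γ(i), is separative: whenever q₀ ≰ q₁ in Q there exists q₂ ≤ q₀ that is incompatible with q₁. -/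
universe u v

/-- The order of the poset `Q` built from a family `f` of functions. -/
def QLe {Λ : Type u} (f : Λ → ℕ → ℕ) (q₁ q₀ : List ℕ × Finset Λ) : Prop :=
  q₀.1 <+: q₁.1 ∧ q₀.2 ⊆ q₁.2 ∧
    ∀ i, q₀.1.length ≤ i → i < q₁.1.length → ∀ γ ∈ q₀.2, q₁.1.getD i 0 ≠ f γ i

/-- A pairwise eventually different family of functions. -/
def PairwiseEvDiff {Λ : Type u} (f : Λ → ℕ → ℕ) : Prop :=
  ∀ γ δ : Λ, γ ≠ δ → ∃ N, ∀ i, N ≤ i → f γ i ≠ f δ i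

lemma getD_of_prefix {l L : List ℕ} (h : l <+: L) {i : ℕ} (hi : i < l.length) :
    L.getD i 0 = l.getD i 0 := by
  obtain ⟨t, rfl⟩ := h
  exact List.getD_append _ _ _ _ hi

lemma QLe_refl {Λ : Type u} (f : Λ → ℕ → ℕ) (q : List ℕ × Finset Λ) : QLe f q q :=
  ⟨List.prefix_refl _, Finset.Subset.refl _, fun _ h1 h2 _ _ => absurd h2 (by omega)⟩

theorem stmt12 {Λ : Type u} (f : Λ → ℕ → ℕ) (hf : PairwiseEvDiff f)
    (q₀ q₁ : List ℕ × Finset Λ) (h : ¬ QLe f q₀ q₁) :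
    ∃ q₂, QLe f q₂ q₀ ∧ ¬ ∃ r, QLe f r q₂ ∧ QLe f r q₁ := by
  obtain ⟨s₀, a₀⟩ := q₀
  obtain ⟨s₁, a₁⟩ := q₁
  simp only [QLe, not_and, not_forall, not_not] at h
  by_cases hp : s₁ <+: s₀
  · by_cases hs : a₁ ⊆ a₀
    · -- third condition fails; q₀ itself is incompatible with q₁
      obtain ⟨i, hi1, hi2, γ, hγ, hvi⟩ := h hp hs
      refine ⟨(s₀, a₀), QLe_refl f _, ?_⟩
      rintro ⟨⟨t, b⟩, hr0, hr1⟩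
      obtain ⟨hpr0, -, -⟩ := hr0
      obtain ⟨hpr1, -, hcond⟩ := hr1
      have hlen : s₀.length ≤ t.length := hpr0.length_le
      have ht : t.getD i 0 = s₀.getD i 0 := getD_of_prefix hpr0 hi2
      exact hcond i hi1 (lt_of_lt_of_le hi2 hlen) γ hγ (ht.trans hvi)
    · -- a₁ ⊄ a₀ : pick δ ∈ a₁ \ a₀ and realize f δ at a far position
      obtain ⟨δ, hδ1, hδ0⟩ := Finset.not_subset.mp hs
      have key : ∀ γ ∈ a₀, ∃ N, ∀ i, N ≤ i → f γ i ≠ f δ i := fun γ hγ =>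
        hf γ δ (by rintro rfl; exact hδ0 hγ)
      choose! g hg using key
      set N := max s₀.length (a₀.sup g) with hN
      have hN0 : s₀.length ≤ N := le_max_left _ _
      have hNγ : ∀ γ ∈ a₀, g γ ≤ N := fun γ hγ =>
        le_trans (Finset.le_sup (f := g) hγ) (le_max_right _ _)
      set av : ℕ → ℕ := fun i => 1 + a₀.sup (fun γ => f γ i) with hav
      have hav' : ∀ i, ∀ γ ∈ a₀, av i ≠ f γ i := by
        intro i γ hγ
        have : f γ i ≤ a₀.sup (fun γ => f γ i) := Finset.le_sup (f := fun γ => f γ i) hγ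
        simp only [hav]; omega
      set m : List ℕ := (List.range' s₀.length (N - s₀.length)).map av with hm
      set s₂ : List ℕ := s₀ ++ m ++ [f δ N] with hs₂
      have hmlen : m.length = N - s₀.length := by simp [hm]
      have hs₂len : s₂.length = N + 1 := by simp [hs₂, hmlen]; omega
      have hmid : ∀ i, s₀.length ≤ i → i < N → s₂.getD i 0 = av i := by
        intro i h1 h2
        rw [hs₂, List.append_assoc, List.getD_append_right _ _ _ _ h1]
        rw [List.getD_append _ _ _ _ (by simp [hmlen]; omega)]
        have hlt : i - s₀.length < (List.range' s₀.length (N - s₀.length)).length := by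
          simp; omega
        rw [hm, List.getD_eq_getElem _ _ (by simpa using hlt), List.getElem_map,
          List.getElem_range']
        congr 1; omega
      have hlast : s₂.getD N 0 = f δ N := by
        rw [hs₂, List.append_assoc, List.getD_append_right _ _ _ _ hN0,
          List.getD_append_right _ _ _ _ (by omega)]
        simp [hmlen]
      refine ⟨(s₂, a₀), ⟨⟨m ++ [f δ N], by simp [hs₂]⟩, Finset.Subset.refl _, ?_⟩, ?_⟩
      · intro i h1 h2 γ hγ
        simp only at h1 h2 ⊢
        rw [hs₂len] at h2
        rcases lt_or_eq_of_le (Nat.lt_succ_iff.mp h2) with h3 | rfl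
        · rw [hmid i h1 h3]; exact hav' i γ hγ
        · rw [hlast]; exact (hg γ hγ N (hNγ γ hγ)).symm
      · rintro ⟨⟨t, b⟩, hr2, hr1⟩
        obtain ⟨hpr2, -, -⟩ := hr2
        obtain ⟨hpr1, -, hcond⟩ := hr1
        have hcond' : ∀ i, s₁.length ≤ i → i < t.length → ∀ γ ∈ a₁, t.getD i 0 ≠ f γ i := hcond
        have hpr2' : s₂ <+: t := hpr2
        have hlen : s₂.length ≤ t.length := hpr2'.length_le
        rw [hs₂len] at hlen
        have h1len : s₁.length ≤ s₀.length := hp.length_le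
        have ht : t.getD N 0 = s₂.getD N 0 := getD_of_prefix hpr2' (by rw [hs₂len]; omega)
        exact hcond' N (by omega) (by omega) δ hδ1 (ht.trans hlast)
  · by_cases hq : s₀ <+: s₁
    · -- s₀ strict prefix of s₁
      have hlt : s₀.length < s₁.length := by
        rcases lt_or_eq_of_le hq.length_le with h' | h'
        · exact h'
        · exact absurd (hq.eq_of_length h' ▸ List.prefix_refl s₁) hp
      set v : ℕ := 1 + max (s₁.getD s₀.length 0) (a₀.sup (fun γ => f γ s₀.length)) with hv
      have hv1 : v ≠ s₁.getD s₀.length 0 := by simp only [hv]; omega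
      have hv2 : ∀ γ ∈ a₀, v ≠ f γ s₀.length := by
        intro γ hγ
        have : f γ s₀.length ≤ a₀.sup (fun γ => f γ s₀.length) :=
          Finset.le_sup (f := fun γ => f γ s₀.length) hγ
        simp only [hv]; omega
      refine ⟨(s₀ ++ [v], a₀), ⟨⟨[v], rfl⟩, Finset.Subset.refl _, ?_⟩, ?_⟩
      · intro i h1 h2 γ hγ
        simp only [List.length_append, List.length_singleton] at h1 h2 ⊢
        have : i = s₀.length := by omega
        subst this
        rw [List.getD_append_right _ _ _ _ le_rfl, Nat.sub_self]
        exact hv2 γ hγ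
      · rintro ⟨⟨t, b⟩, hr2, hr1⟩
        obtain ⟨hpr2, -, -⟩ := hr2
        obtain ⟨hpr1, -, -⟩ := hr1
        have h1 : t.getD s₀.length 0 = (s₀ ++ [v]).getD s₀.length 0 :=
          getD_of_prefix hpr2 (by simp)
        have h2 : t.getD s₀.length 0 = s₁.getD s₀.length 0 := getD_of_prefix hpr1 hlt
        rw [List.getD_append_right _ _ _ _ le_rfl, Nat.sub_self, List.getD_cons_zero] at h1
        exact hv1 (h1.symm.trans h2)
    · -- incomparable stems: q₀ itself is incompatible
      refine ⟨(s₀, a₀), QLe_refl f _, ?_⟩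
      rintro ⟨⟨t, b⟩, hr0, hr1⟩
      obtain ⟨hpr0, -, -⟩ := hr0
      obtain ⟨hpr1, -, -⟩ := hr1
      rcases List.prefix_or_prefix_of_prefix hpr0 hpr1 with h' | h'
      · exact hq h'
      · exact hp h'
end

section
/- The set D is dense in the poset R: every element of R has an extension belonging to D. -/
universe u v

/-- A condition of the poset `R`. -/
@[ext] structure RCond (ι : Type u) : Type u where
  d0 : Finset ι
  d1 : Finset ι
  v0 : ι → List ℕ
  v1 : ι → ℕ
  hasStar : Bool
  star : Finset (List ℕ × ℕ)
  junk0 : ∀ α ∉ d0, v0 α = []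
  junk1 : ∀ α ∉ d1, v1 α = 0
  junkStar : hasStar = false → star = ∅
  starFun : ∀ σ m m', (σ, m) ∈ star → (σ, m') ∈ star → m = m'
  starInj : ∀ σ τ m, (σ, m) ∈ star → (τ, m) ∈ star → σ.length = τ.length → σ = τ

/-- Conditions in `R` are ordered by coordinatewise extension. -/
instance RCond.instPartialOrder (ι : Type u) : PartialOrder (RCond ι) where
  le r₁ r₀ := r₀.d0 ⊆ r₁.d0 ∧ r₀.d1 ⊆ r₁.d1 ∧ (r₀.hasStar = true → r₁.hasStar = true) ∧
    (∀ α ∈ r₀.d0, r₀.v0 α <+: r₁.v0 α) ∧ (∀ α ∈ r₀.d1, r₀.v1 α = r₁.v1 α) ∧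
    (r₀.hasStar = true → r₀.star ⊆ r₁.star)
  le_refl r := ⟨Finset.Subset.refl _, Finset.Subset.refl _, fun h => h,
    fun _ _ => List.prefix_refl _, fun _ _ => rfl, fun _ => Finset.Subset.refl _⟩
  le_trans p q r hpq hqr := by
    obtain ⟨ha1, hb1, hs1, hv1, hw1, hx1⟩ := hpq
    obtain ⟨ha2, hb2, hs2, hv2, hw2, hx2⟩ := hqr
    refine ⟨ha2.trans ha1, hb2.trans hb1, fun h => hs1 (hs2 h), ?_, ?_, ?_⟩
    · exact fun α hα => (hv2 α hα).trans (hv1 α (ha2 hα))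
    · exact fun α hα => (hw2 α hα).trans (hw1 α (hb2 hα))
    · exact fun h => (hx2 h).trans (hx1 (hs2 h))
  le_antisymm p q hpq hqp := by
    obtain ⟨ha1, hb1, hs1, hv1, hw1, hx1⟩ := hpq
    obtain ⟨ha2, hb2, hs2, hv2, hw2, hx2⟩ := hqp
    have hd0 : p.d0 = q.d0 := Finset.Subset.antisymm ha2 ha1
    have hd1 : p.d1 = q.d1 := Finset.Subset.antisymm hb2 hb1
    have hstar : p.hasStar = q.hasStar := by
      revert hs1 hs2
      cases p.hasStar <;> cases q.hasStar <;> simp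
    have hv : p.v0 = q.v0 := by
      funext α
      by_cases hα : α ∈ q.d0
      · exact ((hv2 α (hd0 ▸ hα)).eq_of_length
          (Nat.le_antisymm (hv2 α (hd0 ▸ hα)).length_le (hv1 α hα).length_le))
      · rw [p.junk0 α (hd0 ▸ hα), q.junk0 α hα]
    have hw : p.v1 = q.v1 := by
      funext α
      by_cases hα : α ∈ q.d1
      · exact (hw1 α hα).symm
      · rw [p.junk1 α (hd1 ▸ hα), q.junk1 α hα]
    have hst : p.star = q.star := by
      by_cases hq : q.hasStar = true
      · exact Finset.Subset.antisymm (hx2 (hstar ▸ hq)) (hx1 hq)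
      · rw [p.junkStar (by rw [hstar]; exact Bool.not_eq_true _ ▸ (by simpa using hq)),
          q.junkStar (by simpa using hq)]
    exact RCond.ext hd0 hd1 hv hw hstar hst

/-- Membership of `r` (with associated number `n`) in the set `D`. -/
def RCond.InD {ι : Type u} (r : RCond ι) (n : ℕ) : Prop :=
  r.hasStar = true ∧ r.d0 = r.d1 ∧ (∀ α ∈ r.d0, (r.v0 α).length = n) ∧
    (∀ α ∈ r.d0, ∀ β ∈ r.d0, α ≠ β → r.v0 α ≠ r.v0 β) ∧
    (∀ α ∈ r.d1, r.v1 α ≤ n) ∧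
    (∀ σ : List ℕ, (∃ m, (σ, m) ∈ r.star) ↔ ∃ α ∈ r.d0, σ <+: r.v0 α)

/-- The subset `D` of the poset `R`. -/
def RCond.D (ι : Type u) : Set (RCond ι) := {r | ∃ n : ℕ, r.InD n}

/-- The canonical number `n_r` associated to a condition `r ∈ D`. -/
noncomputable def RCond.nOf {ι : Type u} (r : RCond ι) : ℕ :=
  if h : r.d0.Nonempty then (r.v0 h.choose).length else 0

open scoped Classical in
/-- The value of the finite partial function `r (∗)` at `σ`. -/
noncomputable def RCond.starVal {ι : Type u} (r : RCond ι) (σ : List ℕ) : ℕ :=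
  if h : ∃ m, (σ, m) ∈ r.star then h.choose else 0

open scoped Classical in
/-- The projection `Proj : D → P_ed(ω₂)`:  `Proj r` has domain `{α | (α,0) ∈ dom r}`,
`n_{Proj r} = n_r`, and `Proj r α n = r (α,0) n` for `n < r (α,1)` while
`Proj r α n = r ∗ (r (α,0) ↾ (n+1))` for `r (α,1) ≤ n < n_r`. -/
noncomputable def RCond.proj {ι : Type u} (r : RCond ι) : EDCond ι where
  len := r.nOf
  dom := r.d0
  f := fun α i =>
    if α ∈ r.d0 ∧ i < r.nOf then
      (if i < r.v1 α then (r.v0 α).getD i 0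
       else r.starVal ((r.v0 α).take (i + 1)))
    else 0
  junk := by
    intro α i h
    try simp only []
    rw [if_neg]
    rintro ⟨h1, h2⟩
    rcases h with h | h
    · exact h h1
    · omega

/-- The ordinal `ω₂`. -/
noncomputable def omega2 : Ordinal.{0} := (Cardinal.aleph 2).ord

/-- `ω₂` as a set (type) of ordinals. -/
def Omega2T : Type 1 := {o : Ordinal.{0} // o < omega2}

open scoped Classical

namespace DenseAux

variable {ι : Type u} [Infinite ι]

noncomputable def S (r₀ : RCond ι) : Finset ι := r₀.d0 ∪ r₀.d1

noncomputable def Sig (r₀ : RCond ι) : Finset (List ℕ) := r₀.star.image Prod.fst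

noncomputable def emb (r₀ : RCond ι) : ℕ ↪ ((((S r₀ : Set ι))ᶜ : Set ι)) :=
  ((Set.toFinite (S r₀ : Set ι)).infinite_compl).natEmbedding

noncomputable def w (r₀ : RCond ι) (j : Fin (Sig r₀).card) : ι := (emb r₀ j : ι)

noncomputable def g (r₀ : RCond ι) (j : Fin (Sig r₀).card) : List ℕ :=
  ((Sig r₀).equivFin.symm j : List ℕ)

noncomputable def d0' (r₀ : RCond ι) : Finset ι :=
  S r₀ ∪ Finset.image (w r₀) Finset.univ

noncomputable def L (r₀ : RCond ι) : ℕ :=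
  (Sig r₀).sup List.length ⊔ r₀.d0.sup (fun α => (r₀.v0 α).length) ⊔ r₀.d1.sup r₀.v1

noncomputable def tag (r₀ : RCond ι) (α : ι) : ℕ := (d0' r₀).toList.idxOf α

noncomputable def pad (r₀ : RCond ι) (σ : List ℕ) (α : ι) : List ℕ :=
  (σ ++ List.replicate (L r₀ - σ.length) 0) ++ [tag r₀ α]

noncomputable def v0' (r₀ : RCond ι) (α : ι) : List ℕ :=
  if α ∈ S r₀ then pad r₀ (r₀.v0 α) α
  else if h : ∃ j, w r₀ j = α then pad r₀ (g r₀ h.choose) α else []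

noncomputable def v1' (r₀ : RCond ι) (α : ι) : ℕ := if α ∈ r₀.d1 then r₀.v1 α else 0

noncomputable def M (r₀ : RCond ι) : ℕ := (r₀.star.image Prod.snd).sup id + 1

noncomputable def fval (r₀ : RCond ι) (σ : List ℕ) : ℕ :=
  if h : ∃ m, (σ, m) ∈ r₀.star then h.choose else Encodable.encode σ + M r₀

noncomputable def prefs (r₀ : RCond ι) : Finset (List ℕ) :=
  (d0' r₀).biUnion (fun α => (v0' r₀ α).inits.toFinset)

noncomputable def star' (r₀ : RCond ι) : Finset (List ℕ × ℕ) :=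
  (prefs r₀).image (fun σ => (σ, fval r₀ σ))

variable (r₀ : RCond ι)

lemma w_not_mem_S (j : Fin (Sig r₀).card) : w r₀ j ∉ S r₀ := by
  intro h
  exact (emb r₀ j).2 (by simpa [w] using h)

lemma w_inj : Function.Injective (w r₀) := fun a b h =>
  Fin.ext ((emb r₀).injective (Subtype.ext h))

lemma g_mem (j : Fin (Sig r₀).card) : g r₀ j ∈ Sig r₀ := ((Sig r₀).equivFin.symm j).2

lemma g_surj {σ : List ℕ} (hσ : σ ∈ Sig r₀) : ∃ j, g r₀ j = σ :=
  ⟨(Sig r₀).equivFin ⟨σ, hσ⟩, by simp [g]⟩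

lemma len_d0_le {α : ι} (h : α ∈ r₀.d0) : (r₀.v0 α).length ≤ L r₀ :=
  le_trans (Finset.le_sup (f := fun α => (r₀.v0 α).length) h)
    (le_sup_of_le_left le_sup_right)

lemma len_sig_le {σ : List ℕ} (h : σ ∈ Sig r₀) : σ.length ≤ L r₀ :=
  le_trans (Finset.le_sup (f := List.length) h) (le_sup_of_le_left le_sup_left)

lemma v1_le {α : ι} (h : α ∈ r₀.d1) : r₀.v1 α ≤ L r₀ :=
  le_trans (Finset.le_sup (f := r₀.v1) h) le_sup_right

lemma len_pad {σ : List ℕ} (hσ : σ.length ≤ L r₀) (α : ι) :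
    (pad r₀ σ α).length = L r₀ + 1 := by
  simp only [pad, List.length_append, List.length_replicate, List.length_singleton]
  omega

lemma prefix_pad (σ : List ℕ) (α : ι) : σ <+: pad r₀ σ α :=
  ⟨List.replicate (L r₀ - σ.length) 0 ++ [tag r₀ α], by simp [pad]⟩

lemma getLast?_pad (σ : List ℕ) (α : ι) :
    (pad r₀ σ α).getLast? = some (tag r₀ α) := List.getLast?_concat

lemma tag_inj {α β : ι} (hα : α ∈ d0' r₀) (hβ : β ∈ d0' r₀)
    (h : tag r₀ α = tag r₀ β) : α = β := by
  have hα' : α ∈ (d0' r₀).toList := Finset.mem_toList.2 hα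
  have hβ' : β ∈ (d0' r₀).toList := Finset.mem_toList.2 hβ
  exact (List.idxOf_inj hα').1 h

lemma v0'_spec {α : ι} (hα : α ∈ d0' r₀) :
    ∃ σ, σ.length ≤ L r₀ ∧ v0' r₀ α = pad r₀ σ α ∧ (α ∈ r₀.d0 → σ = r₀.v0 α) := by
  rcases Finset.mem_union.1 hα with h | h
  · refine ⟨r₀.v0 α, ?_, by simp [v0', h], fun _ => rfl⟩
    by_cases hd : α ∈ r₀.d0
    · exact len_d0_le r₀ hd
    · simp [r₀.junk0 α hd]
  · obtain ⟨j, -, hj⟩ := Finset.mem_image.1 h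
    have hns : α ∉ S r₀ := hj ▸ w_not_mem_S r₀ j
    have hex : ∃ j', w r₀ j' = α := ⟨j, hj⟩
    refine ⟨g r₀ hex.choose, len_sig_le r₀ (g_mem r₀ _), by simp [v0', hns, hex], ?_⟩
    intro hd
    exact absurd (Finset.mem_union_left _ hd) hns

lemma v0'_w (j : Fin (Sig r₀).card) : v0' r₀ (w r₀ j) = pad r₀ (g r₀ j) (w r₀ j) := by
  have hns := w_not_mem_S r₀ j
  have hex : ∃ j', w r₀ j' = w r₀ j := ⟨j, rfl⟩
  have : hex.choose = j := w_inj r₀ hex.choose_spec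
  simp [v0', hns, hex, this]

lemma lt_M {σ : List ℕ} {m : ℕ} (h : (σ, m) ∈ r₀.star) : m < M r₀ := by
  have : m ≤ (r₀.star.image Prod.snd).sup id :=
    Finset.le_sup (f := id) (Finset.mem_image.2 ⟨(σ, m), h, rfl⟩)
  simpa [M, Nat.lt_succ_iff] using this

lemma fval_of_mem {σ : List ℕ} {m : ℕ} (h : (σ, m) ∈ r₀.star) : fval r₀ σ = m := by
  have hex : ∃ m, (σ, m) ∈ r₀.star := ⟨m, h⟩
  rw [fval, dif_pos hex]
  exact r₀.starFun σ _ m hex.choose_spec h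

lemma mem_star'_iff {σ : List ℕ} {m : ℕ} :
    (σ, m) ∈ star' r₀ ↔ σ ∈ prefs r₀ ∧ m = fval r₀ σ := by
  constructor
  · intro h
    obtain ⟨τ, hτ, heq⟩ := Finset.mem_image.1 h
    obtain ⟨h1, h2⟩ := Prod.mk.injEq .. ▸ heq
    exact ⟨h1 ▸ hτ, h1 ▸ h2.symm⟩
  · rintro ⟨h1, rfl⟩
    exact Finset.mem_image.2 ⟨σ, h1, rfl⟩

lemma mem_prefs_iff {σ : List ℕ} :
    σ ∈ prefs r₀ ↔ ∃ α ∈ d0' r₀, σ <+: v0' r₀ α := by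
  simp [prefs, List.mem_inits]

end DenseAux

open DenseAux in
theorem RCond.dense {ι : Type u} [Infinite ι] (r₀ : RCond ι) :
    ∃ r ∈ RCond.D ι, r ≤ r₀ := by
  classical
  refine ⟨⟨d0' r₀, d0' r₀, v0' r₀, v1' r₀, true, star' r₀, ?_, ?_, ?_, ?_, ?_⟩, ?_, ?_⟩
  · -- junk0
    intro α hα
    have hns : α ∉ S r₀ := fun h => hα (Finset.mem_union_left _ h)
    have hex : ¬ ∃ j, w r₀ j = α := by
      rintro ⟨j, rfl⟩
      exact hα (Finset.mem_union_right _ (Finset.mem_image.2 ⟨j, Finset.mem_univ _, rfl⟩))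
    simp [v0', hns, hex]
  · -- junk1
    intro α hα
    have : α ∉ r₀.d1 := fun h => hα (Finset.mem_union_left _ (Finset.mem_union_right _ h))
    simp [v1', this]
  · -- junkStar
    intro h; cases h
  · -- starFun
    intro σ m m' h1 h2
    rw [(mem_star'_iff r₀).1 h1 |>.2, (mem_star'_iff r₀).1 h2 |>.2]
  · -- starInj
    intro σ τ m h1 h2 hlen
    have hm1 : m = fval r₀ σ := ((mem_star'_iff r₀).1 h1).2
    have hm2 : m = fval r₀ τ := ((mem_star'_iff r₀).1 h2).2
    by_cases hσ : ∃ m, (σ, m) ∈ r₀.star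
    · have hσs : (σ, m) ∈ r₀.star := by
        rw [hm1, fval, dif_pos hσ]; exact hσ.choose_spec
      by_cases hτ : ∃ m, (τ, m) ∈ r₀.star
      · have hτs : (τ, m) ∈ r₀.star := by
          rw [hm2, fval, dif_pos hτ]; exact hτ.choose_spec
        exact r₀.starInj σ τ m hσs hτs hlen
      · exfalso
        have h1' : m < M r₀ := lt_M r₀ hσs
        have h2' : m = Encodable.encode τ + M r₀ := by rw [hm2, fval, dif_neg hτ]
        omega
    · by_cases hτ : ∃ m, (τ, m) ∈ r₀.star
      · exfalso
        have hτs : (τ, m) ∈ r₀.star := by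
          rw [hm2, fval, dif_pos hτ]; exact hτ.choose_spec
        have h1' : m < M r₀ := lt_M r₀ hτs
        have h2' : m = Encodable.encode σ + M r₀ := by rw [hm1, fval, dif_neg hσ]
        omega
      · have h1' : m = Encodable.encode σ + M r₀ := by rw [hm1, fval, dif_neg hσ]
        have h2' : m = Encodable.encode τ + M r₀ := by rw [hm2, fval, dif_neg hτ]
        exact Encodable.encode_injective (by omega)
  · -- membership in D
    refine ⟨L r₀ + 1, rfl, rfl, ?_, ?_, ?_, ?_⟩
    · intro α hα
      dsimp only
      obtain ⟨σ, hlen, heq, -⟩ := v0'_spec r₀ hα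
      rw [heq, len_pad r₀ hlen]
    · intro α hα β hβ hne heq
      dsimp only at heq ⊢
      obtain ⟨σ, -, heqα, -⟩ := v0'_spec r₀ hα
      obtain ⟨τ, -, heqβ, -⟩ := v0'_spec r₀ hβ
      rw [heqα, heqβ] at heq
      have := congrArg List.getLast? heq
      rw [getLast?_pad, getLast?_pad] at this
      exact hne (tag_inj r₀ hα hβ (Option.some.inj this))
    · intro α _
      by_cases h : α ∈ r₀.d1
      · simp only [v1', if_pos h]
        exact le_trans (v1_le r₀ h) (Nat.le_succ _)
      · simp [v1', h]
    · intro σ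
      rw [← mem_prefs_iff r₀]
      constructor
      · rintro ⟨m, hm⟩
        exact ((mem_star'_iff r₀).1 hm).1
      · intro h
        exact ⟨fval r₀ σ, (mem_star'_iff r₀).2 ⟨h, rfl⟩⟩
  · -- r ≤ r₀
    have hd0S : r₀.d0 ⊆ S r₀ := Finset.subset_union_left
    have hd1S : r₀.d1 ⊆ S r₀ := Finset.subset_union_right
    have hSd0' : S r₀ ⊆ d0' r₀ := Finset.subset_union_left
    refine ⟨hd0S.trans hSd0', hd1S.trans hSd0', fun _ => rfl, ?_, ?_, ?_⟩
    · intro α hα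
      have hαS : α ∈ S r₀ := hd0S hα
      simp only [v0', if_pos hαS]
      exact prefix_pad r₀ _ _
    · intro α hα
      simp [v1', hα]
    · intro _
      intro p hp
      obtain ⟨σ, m⟩ := p
      have hσ : σ ∈ Sig r₀ := Finset.mem_image.2 ⟨(σ, m), hp, rfl⟩
      obtain ⟨j, hj⟩ := g_surj r₀ hσ
      refine (mem_star'_iff r₀).2 ⟨?_, (fval_of_mem r₀ hp).symm⟩
      refine (mem_prefs_iff r₀).2 ⟨w r₀ j, ?_, ?_⟩
      · exact Finset.mem_union_right _ (Finset.mem_image.2 ⟨j, Finset.mem_univ _, rfl⟩)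
      · rw [v0'_w r₀ j, ← hj]
        exact prefix_pad r₀ _ _

instance : Infinite Omega2T := by
  refine Infinite.of_injective (fun n : ℕ => (⟨n, ?_⟩ : Omega2T)) ?_
  · refine lt_of_lt_of_le (Ordinal.nat_lt_omega0 n) ?_
    rw [← Cardinal.ord_aleph0]
    refine Cardinal.ord_le_ord.2 ?_
    rw [← Cardinal.aleph_zero]
    exact Cardinal.aleph_le_aleph.2 (by norm_num)
  · intro a b h
    simpa using congrArg Subtype.val h

theorem stmt14 : ∀ r₀ : RCond Omega2T, ∃ r ∈ RCond.D Omega2T, r ≤ r₀ :=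
  fun r₀ => RCond.dense r₀
end

section
/- The map Proj : D → P_ed(ω₂) is order-preserving: if r₀ ≥ r₁ in D then Proj(r₀) ≥ Proj(r₁) in P_ed(ω₂). -/
universe u v

lemma RCond.starVal_eq {ι : Type u} (r : RCond ι) (σ : List ℕ) (m : ℕ)
    (h : (σ, m) ∈ r.star) : r.starVal σ = m := by
  classical
  have hex : ∃ m, (σ, m) ∈ r.star := ⟨m, h⟩
  rw [RCond.starVal]
  rw [dif_pos hex]
  exact r.starFun σ _ m hex.choose_spec h

lemma RCond.nOf_eq {ι : Type u} (r : RCond ι) (n : ℕ) (h : r.InD n)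
    {α : ι} (hα : α ∈ r.d0) : r.nOf = n := by
  have hne : r.d0.Nonempty := ⟨α, hα⟩
  rw [RCond.nOf, dif_pos hne]
  exact h.2.2.1 _ hne.choose_spec

theorem stmt15 : ∀ r₀ ∈ RCond.D Omega2T, ∀ r₁ ∈ RCond.D Omega2T, r₁ ≤ r₀ →
    RCond.proj r₁ ≤ RCond.proj r₀ := by
  rintro r₀ ⟨n₀, h₀⟩ r₁ ⟨n₁, h₁⟩ hle
  obtain ⟨ha, hb, hs, hv, hw, hx⟩ := hle
  obtain ⟨hst₀, hdd₀, hlen₀, hdist₀, hv1₀, hstar₀⟩ := h₀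
  obtain ⟨hst₁, hdd₁, hlen₁, hdist₁, hv1₁, hstar₁⟩ := h₁
  -- basic facts
  have hn01 : ∀ α ∈ r₀.d0, r₀.nOf ≤ r₁.nOf := by
    intro α hα
    rw [RCond.nOf_eq r₀ n₀ ⟨hst₀, hdd₀, hlen₀, hdist₀, hv1₀, hstar₀⟩ hα,
      RCond.nOf_eq r₁ n₁ ⟨hst₁, hdd₁, hlen₁, hdist₁, hv1₁, hstar₁⟩ (ha hα)]
    have := (hv α hα).length_le
    rw [hlen₀ α hα, hlen₁ α (ha hα)] at this
    exact this
  have hlen_le : r₀.nOf ≤ r₁.nOf := by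
    by_cases hne : r₀.d0.Nonempty
    · exact hn01 _ hne.choose_spec
    · rw [RCond.nOf, dif_neg hne]; exact Nat.zero_le _
  -- starVal agreement on the domain of r₀.star
  have hsv : ∀ σ : List ℕ, (∃ m, (σ, m) ∈ r₀.star) → r₁.starVal σ = r₀.starVal σ := by
    rintro σ ⟨m, hm⟩
    rw [r₀.starVal_eq σ m hm, r₁.starVal_eq σ m (hx hst₀ hm)]
  refine ⟨ha, hlen_le, ?_, ?_⟩
  · -- value agreement
    intro α hα i hi
    have hn₀ : r₀.nOf = n₀ := RCond.nOf_eq r₀ n₀ ⟨hst₀, hdd₀, hlen₀, hdist₀, hv1₀, hstar₀⟩ hα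
    have hi₀ : i < n₀ := hn₀ ▸ hi
    have hpref := hv α hα
    have hlα : (r₀.v0 α).length = n₀ := hlen₀ α hα
    obtain ⟨t, ht⟩ := hpref
    have htake : (r₁.v0 α).take (i + 1) = (r₀.v0 α).take (i + 1) := by
      rw [← ht, List.take_append, Nat.sub_eq_zero_of_le (by omega),
        List.take_zero, List.append_nil]
    have hgetD : (r₁.v0 α).getD i 0 = (r₀.v0 α).getD i 0 := by
      rw [List.getD_eq_getElem?_getD, List.getD_eq_getElem?_getD, ← ht,
        List.getElem?_append_left (by omega)]
    have hv1eq : r₁.v1 α = r₀.v1 α := (hw α (hdd₀ ▸ hα)).symm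
    have hc1 : α ∈ r₁.d0 ∧ i < r₁.nOf := ⟨ha hα, lt_of_lt_of_le hi (hn01 α hα)⟩
    have hc0 : α ∈ r₀.d0 ∧ i < r₀.nOf := ⟨hα, hi⟩
    simp only [RCond.proj]
    rw [if_pos hc1, if_pos hc0, hv1eq]
    by_cases hcase : i < r₀.v1 α
    · rw [if_pos hcase, if_pos hcase, hgetD]
    · rw [if_neg hcase, if_neg hcase, htake]
      exact hsv _ ((hstar₀ _).mpr ⟨α, hα, List.take_prefix _ _⟩)
  · -- eventual difference
    intro i hi hi' α hα β hβ hαβ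
    have hn₀ : r₀.nOf = n₀ := RCond.nOf_eq r₀ n₀ ⟨hst₀, hdd₀, hlen₀, hdist₀, hv1₀, hstar₀⟩ hα
    have hn₁ : r₁.nOf = n₁ := RCond.nOf_eq r₁ n₁ ⟨hst₁, hdd₁, hlen₁, hdist₁, hv1₁, hstar₁⟩ (ha hα)
    have hi₀ : n₀ ≤ i := hn₀ ▸ hi
    have hi₁ : i < n₁ := hn₁ ▸ hi'
    have key : ∀ γ ∈ r₀.d0, (RCond.proj r₁).f γ i = r₁.starVal ((r₁.v0 γ).take (i + 1)) := by
      intro γ hγ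
      have : ¬ i < r₁.v1 γ := by
        have h1 : r₁.v1 γ = r₀.v1 γ := (hw γ (hdd₀ ▸ hγ)).symm
        have h2 : r₀.v1 γ ≤ n₀ := hv1₀ γ (hdd₀ ▸ hγ)
        omega
      have hc1 : γ ∈ r₁.d0 ∧ i < r₁.nOf := ⟨ha hγ, hn₁ ▸ hi₁⟩
      simp only [RCond.proj]
      rw [if_pos hc1, if_neg this]
    rw [key α hα, key β hβ]
    intro heq
    -- both takes are in the domain of r₁.star
    set σα := (r₁.v0 α).take (i + 1) with hσα
    set σβ := (r₁.v0 β).take (i + 1) with hσβ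
    obtain ⟨mα, hmα⟩ := (hstar₁ σα).mpr ⟨α, ha hα, List.take_prefix _ _⟩
    obtain ⟨mβ, hmβ⟩ := (hstar₁ σβ).mpr ⟨β, ha hβ, List.take_prefix _ _⟩
    rw [r₁.starVal_eq σα mα hmα, r₁.starVal_eq σβ mβ hmβ] at heq
    subst heq
    have hlenα : σα.length = i + 1 := by
      rw [hσα, List.length_take, hlen₁ α (ha hα)]; omega
    have hlenβ : σβ.length = i + 1 := by
      rw [hσβ, List.length_take, hlen₁ β (ha hβ)]; omega
    have hσeq : σα = σβ := r₁.starInj σα σβ mα hmα hmβ (by omega)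
    -- then the length-n₀ prefixes agree, contradicting distinctness in r₀
    have hpα : r₀.v0 α = σα.take n₀ := by
      rw [hσα, List.take_take, min_eq_left (by omega)]
      have := List.prefix_iff_eq_take.mp (hv α hα)
      rw [this, hlen₀ α hα]
    have hpβ : r₀.v0 β = σβ.take n₀ := by
      rw [hσβ, List.take_take, min_eq_left (by omega)]
      have := List.prefix_iff_eq_take.mp (hv β hβ)
      rw [this, hlen₀ β hβ]
    exact hdist₀ α hα β hβ hαβ (by rw [hpα, hpβ, hσeq])
end
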